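/- arXiv:1611.07453 — 4 statements merged into one kernel-verified Lean document; each statement's English description precedes it below -/
import Mathlib

section
/- Let G be a group with finite generating set S, and let H be a finitely generated infinite normal subgroup of infinite index in G whose finite generating set T is contained in S. Then for every positive integer r and all x, y in G with |x|_S = |y|_S = r, there is a sequence x = g_0, g_1, ..., g_n = y in G with g_j^{-1} g_{j+1} ∈ S ∪ S^{-1} for all j, with |g_j|_S ≥ r/2 for all j, and with n ≤ 4·Dist_G^H(32r) + 12r. (This is the content of the theorem that the divergence of G is dominated by the distortion of H in G, expressed at the level of the Cayley graph of (G,S).) -/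
open Pointwise

/-- The word length of `g` with respect to a set `S` of letters:
the least `n` such that `g` is a product of `n` elements of `S ∪ S⁻¹`. -/
noncomputable def wordLength {G : Type*} [Group G] (S : Set G) (g : G) : ℕ :=
  sInf {n | ∃ l : List G, l.length = n ∧ (∀ x ∈ l, x ∈ S ∨ x⁻¹ ∈ S) ∧ l.prod = g}

/-- The distortion function of a subgroup `H` (with generating set `T`) in a group
generated by `S`: `Dist(r) = max { |h|_T : h ∈ H, |h|_S ≤ r }`. -/
noncomputable def distortion {G : Type*} [Group G] (S T : Set G) (H : Subgroup G)
    (r : ℕ) : ℕ :=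
  sSup {n | ∃ h ∈ H, wordLength S h ≤ r ∧ wordLength T h = n}

namespace DivDistAux

/-- `l` is a word over the alphabet `S ∪ S⁻¹`. -/
def IsWord {G : Type*} [Group G] (S : Set G) (l : List G) : Prop :=
  ∀ x ∈ l, x ∈ S ∨ x⁻¹ ∈ S

variable {G : Type*} [Group G]

lemma IsWord.append {S : Set G} {l₁ l₂ : List G} (h₁ : IsWord S l₁) (h₂ : IsWord S l₂) :
    IsWord S (l₁ ++ l₂) := by
  intro x hx
  rcases List.mem_append.mp hx with h | h
  · exact h₁ x h
  · exact h₂ x h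

lemma IsWord.take {S : Set G} {l : List G} (h : IsWord S l) (n : ℕ) : IsWord S (l.take n) :=
  fun x hx => h x (List.take_subset n l hx)

lemma IsWord.mono {S U : Set G} (hSU : S ⊆ U) {l : List G} (h : IsWord S l) : IsWord U l :=
  fun x hx => (h x hx).imp (fun hh => hSU hh) (fun hh => hSU hh)

/-- the reversed, letterwise-inverted word -/
def revinv (l : List G) : List G := (l.map fun x => x⁻¹).reverse

@[simp] lemma revinv_length (l : List G) : (revinv l).length = l.length := by
  simp [revinv]

lemma revinv_prod (l : List G) : (revinv l).prod = (l.prod)⁻¹ :=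
  (List.prod_inv_reverse l).symm

lemma IsWord.revinv {S : Set G} {l : List G} (h : IsWord S l) : IsWord S (DivDistAux.revinv l) := by
  intro x hx
  simp only [DivDistAux.revinv, List.mem_reverse, List.mem_map] at hx
  obtain ⟨a, ha, rfl⟩ := hx
  rcases h a ha with h' | h'
  · exact Or.inr (by simpa using h')
  · exact Or.inl h'

lemma wordLength_le {S : Set G} {l : List G} (hw : IsWord S l) :
    wordLength S l.prod ≤ l.length :=
  Nat.sInf_le ⟨l, rfl, hw, rfl⟩

lemma wordLength_le' {S : Set G} {l : List G} {g : G} (hw : IsWord S l) (hp : l.prod = g) :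
    wordLength S g ≤ l.length := hp ▸ wordLength_le hw

lemma exists_word {S : Set G} {g : G} (hg : g ∈ Subgroup.closure S) :
    ∃ l : List G, IsWord S l ∧ l.prod = g := by
  induction hg using Subgroup.closure_induction with
  | mem x hx => exact ⟨[x], by intro y hy; simp at hy; subst hy; exact Or.inl hx, by simp⟩
  | one => exact ⟨[], by intro y hy; simp at hy, by simp⟩
  | mul a b _ _ iha ihb =>
      obtain ⟨l₁, h₁, hp₁⟩ := iha
      obtain ⟨l₂, h₂, hp₂⟩ := ihb
      exact ⟨l₁ ++ l₂, h₁.append h₂, by simp [hp₁, hp₂]⟩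
  | inv a _ iha =>
      obtain ⟨l, h, hp⟩ := iha
      exact ⟨revinv l, h.revinv, by rw [revinv_prod, hp]⟩

lemma exists_min_word {S : Set G} {g : G} (hg : g ∈ Subgroup.closure S) :
    ∃ l : List G, IsWord S l ∧ l.prod = g ∧ l.length = wordLength S g := by
  have hne : {n | ∃ l : List G, l.length = n ∧ IsWord S l ∧ l.prod = g}.Nonempty := by
    obtain ⟨l, hw, hp⟩ := exists_word hg
    exact ⟨l.length, l, rfl, hw, hp⟩
  obtain ⟨l, hlen, hw, hp⟩ := Nat.sInf_mem hne
  exact ⟨l, hw, hp, hlen⟩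

@[simp] lemma wordLength_one (S : Set G) : wordLength S (1 : G) = 0 := by
  have : wordLength S (List.prod ([] : List G)) ≤ 0 := wordLength_le (by intro x hx; simp at hx)
  simpa using this

lemma wordLength_letter {S : Set G} {a : G} (h : a ∈ S ∨ a⁻¹ ∈ S) : wordLength S a ≤ 1 := by
  have : wordLength S (List.prod [a]) ≤ 1 := wordLength_le (by intro x hx; simp at hx; subst hx; exact h)
  simpa using this

section ClosureTop

variable {S : Set G} (hS : Subgroup.closure S = ⊤)

include hS

lemma mem_closure_top (g : G) : g ∈ Subgroup.closure S := by rw [hS]; trivial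

lemma wordLength_mul_le (a b : G) :
    wordLength S (a * b) ≤ wordLength S a + wordLength S b := by
  obtain ⟨la, hwa, hpa, hla⟩ := exists_min_word (mem_closure_top hS a)
  obtain ⟨lb, hwb, hpb, hlb⟩ := exists_min_word (mem_closure_top hS b)
  have hp : (la ++ lb).prod = a * b := by rw [List.prod_append, hpa, hpb]
  have := wordLength_le' (hwa.append hwb) hp
  simpa [hla, hlb] using this

lemma wordLength_inv (a : G) : wordLength S a⁻¹ = wordLength S a := by
  have key : ∀ c : G, wordLength S c⁻¹ ≤ wordLength S c := by
    intro c
    obtain ⟨l, hw, hp, hl⟩ := exists_min_word (mem_closure_top hS c)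
    have := wordLength_le' hw.revinv (by rw [revinv_prod, hp])
    simpa [hl] using this
  exact le_antisymm (key a) (by simpa using key a⁻¹)

/-- `|g| ≤ |g·p| + |p|` -/
lemma wordLength_ge_left (g p : G) :
    wordLength S g ≤ wordLength S (g * p) + wordLength S p := by
  have : g = (g * p) * p⁻¹ := by group
  calc wordLength S g = wordLength S ((g * p) * p⁻¹) := by rw [← this]
    _ ≤ wordLength S (g * p) + wordLength S p⁻¹ := wordLength_mul_le hS _ _
    _ = wordLength S (g * p) + wordLength S p := by rw [wordLength_inv hS]

/-- `|p| ≤ |g| + |g·p|` -/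
lemma wordLength_ge_right (g p : G) :
    wordLength S p ≤ wordLength S g + wordLength S (g * p) := by
  have : p = g⁻¹ * (g * p) := by group
  calc wordLength S p = wordLength S (g⁻¹ * (g * p)) := by rw [← this]
    _ ≤ wordLength S g⁻¹ + wordLength S (g * p) := wordLength_mul_le hS _ _
    _ = wordLength S g + wordLength S (g * p) := by rw [wordLength_inv hS]

lemma ball_finite (hSfin : S.Finite) (n : ℕ) :
    {g : G | wordLength S g ≤ n}.Finite := by
  induction n with
  | zero =>
      apply Set.Finite.subset (Set.finite_singleton (1 : G))
      intro g hg
      obtain ⟨l, hw, hp, hlen⟩ := exists_min_word (mem_closure_top hS g)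
      have h0 : l.length = 0 := by
        have := hg; simp only [Set.mem_setOf_eq] at this; omega
      rw [List.length_eq_zero_iff] at h0
      subst h0
      simp at hp
      simp [← hp]
  | succ n ih =>
      have hsub : {g : G | wordLength S g ≤ n + 1} ⊆
          {g : G | wordLength S g ≤ n} ∪
            ⋃ a ∈ (S ∪ S⁻¹), (fun g => g * a) '' {g : G | wordLength S g ≤ n} := by
        intro g hg
        simp only [Set.mem_setOf_eq] at hg
        obtain ⟨l, hw, hp, hlen⟩ := exists_min_word (mem_closure_top hS g)
        by_cases hc : l.length ≤ n
        · left; simp only [Set.mem_setOf_eq]; omega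
        · right
          have hne : l ≠ [] := by
            intro h; subst h; simp at hc
          have hdec : l.dropLast ++ [l.getLast hne] = l := List.dropLast_append_getLast hne
          have hwa : l.getLast hne ∈ S ∨ (l.getLast hne)⁻¹ ∈ S := hw _ (List.getLast_mem hne)
          have hgeq : g = l.dropLast.prod * l.getLast hne := by
            rw [← hp]; conv_lhs => rw [← hdec]
            simp
          have hwd : IsWord S l.dropLast := by
            intro x hx
            exact hw x (List.dropLast_subset l hx)
          have hld : wordLength S l.dropLast.prod ≤ n := by
            have h1 := wordLength_le hwd
            have h2 : l.dropLast.length = l.length - 1 := List.length_dropLast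
            omega
          refine Set.mem_biUnion ?_ ⟨l.dropLast.prod, hld, hgeq.symm⟩
          rcases hwa with h | h
          · exact Set.mem_union_left _ h
          · exact Set.mem_union_right _ (by simpa [Set.mem_inv] using h)
      apply Set.Finite.subset _ hsub
      apply Set.Finite.union ih
      apply Set.Finite.biUnion (hSfin.union hSfin.inv)
      intro a _
      exact ih.image _

lemma exists_wordLength_ge (hSfin : S.Finite) [Infinite G] (n : ℕ) :
    ∃ g : G, n ≤ wordLength S g := by
  obtain ⟨g, hg⟩ := ((ball_finite hS hSfin n).infinite_compl).nonempty
  simp only [Set.mem_compl_iff, Set.mem_setOf_eq, not_le] at hg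
  exact ⟨g, hg.le⟩

lemma prefix_step {l : List G} (hw : IsWord S l) (g : G) (j : ℕ) :
    wordLength S (g * (l.take (j+1)).prod) ≤ wordLength S (g * (l.take j).prod) + 1 := by
  by_cases hj : j < l.length
  · have : l.take (j+1) = l.take j ++ [l[j]] := by
      rw [List.take_succ, List.getElem?_eq_getElem hj]
      simp
    rw [this, List.prod_append, List.prod_singleton, ← mul_assoc]
    exact (wordLength_mul_le hS _ _).trans
      (Nat.add_le_add_left (wordLength_letter (hw _ (l.getElem_mem hj))) _)
  · rw [List.take_of_length_le (by omega), List.take_of_length_le (by omega)]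
    omega

end ClosureTop

lemma ivt (f : ℕ → ℕ) (hstep : ∀ j, f (j+1) ≤ f j + 1) (N m : ℕ)
    (h0 : f 0 ≤ m) (hN : m ≤ f N) : ∃ j, j ≤ N ∧ f j = m := by
  induction N with
  | zero => exact ⟨0, le_refl _, le_antisymm h0 hN⟩
  | succ N ih =>
      by_cases hc : m ≤ f N
      · obtain ⟨j, hj, hfj⟩ := ih hc
        exact ⟨j, hj.trans (Nat.le_succ N), hfj⟩
      · push_neg at hc
        have := hstep N
        exact ⟨N+1, le_refl _, by omega⟩

lemma exists_wordLength_eq {S : Set G} (hS : Subgroup.closure S = ⊤) (hSfin : S.Finite)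
    [Infinite G] (n : ℕ) : ∃ g : G, wordLength S g = n := by
  obtain ⟨g, hg⟩ := exists_wordLength_ge hS hSfin n
  obtain ⟨l, hw, hp, hlen⟩ := exists_min_word (mem_closure_top hS g)
  obtain ⟨j, _, hfj⟩ := ivt (fun j => wordLength S (l.take j).prod)
    (fun j => by simpa using prefix_step hS hw 1 j) l.length n (by simp) (by
      show n ≤ wordLength S (List.take l.length l).prod
      rw [List.take_length, hp]; omega)
  exact ⟨(l.take j).prod, hfj⟩

end DivDistAux
namespace DivDistAux

variable {G : Type*} [Group G]

section Maps

variable {B : Type*} [Group B]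

lemma wordLength_map_le (f : G →* B) (S : Set G) {g : G}
    (hg : g ∈ Subgroup.closure S) :
    wordLength (⇑f '' S) (f g) ≤ wordLength S g := by
  obtain ⟨l, hw, hp, hlen⟩ := exists_min_word hg
  have hw' : IsWord (⇑f '' S) (l.map ⇑f) := by
    intro x hx
    simp only [List.mem_map] at hx
    obtain ⟨a, ha, rfl⟩ := hx
    rcases hw a ha with h | h
    · exact Or.inl ⟨a, h, rfl⟩
    · exact Or.inr ⟨a⁻¹, h, by simp⟩
  have hp' : (l.map ⇑f).prod = f g := by rw [← map_list_prod, hp]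
  have := wordLength_le' hw' hp'
  simpa [hlen] using this

lemma exists_lift_word (f : G →* B) (S : Set G) {lB : List B}
    (hw : IsWord (⇑f '' S) lB) :
    ∃ lA : List G, IsWord S lA ∧ lA.length = lB.length ∧ f lA.prod = lB.prod := by
  induction lB with
  | nil => exact ⟨[], by intro x hx; simp at hx, rfl, by simp⟩
  | cons b lb ih =>
      obtain ⟨la, hwa, hlen, hfp⟩ := ih (fun x hx => hw x (List.mem_cons_of_mem _ hx))
      rcases hw b (List.mem_cons_self) with ⟨a, ha, hfa⟩ | ⟨a, ha, hfa⟩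
      · refine ⟨a :: la, ?_, by simp [hlen], by simp [hfp, hfa]⟩
        intro x hx
        rcases List.mem_cons.mp hx with rfl | hx
        · exact Or.inl ha
        · exact hwa x hx
      · refine ⟨a⁻¹ :: la, ?_, by simp [hlen], ?_⟩
        · intro x hx
          rcases List.mem_cons.mp hx with rfl | hx
          · exact Or.inr (by simpa using ha)
          · exact hwa x hx
        · have hb : b = (f a)⁻¹ := by rw [hfa]; simp
          simp [hfp, hb]

/-- lift an element of the image group to a word of the same length -/
lemma exists_lift (f : G →* B) (S : Set G) (hfS : Subgroup.closure (⇑f '' S) = ⊤) (q : B) :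
    ∃ l : List G, IsWord S l ∧ l.length = wordLength (⇑f '' S) q ∧ f l.prod = q := by
  obtain ⟨lB, hw, hp, hlen⟩ := exists_min_word (mem_closure_top hfS q)
  obtain ⟨lA, hwA, hlenA, hfp⟩ := exists_lift_word f S hw
  exact ⟨lA, hwA, by omega, by rw [hfp, hp]⟩

end Maps

/-- The volume escape lemma: in an infinite group, from any point one can reach,
within `R` steps, a point of word length at least `R`. -/
lemma escape_lemma {A : Type*} [Group A] [Infinite A] {U : Set A}
    (hU : Subgroup.closure U = ⊤) (hUfin : U.Finite) (v : A) (R : ℕ) :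
    ∃ u : A, wordLength U u ≤ R ∧ R ≤ wordLength U (v * u) := by
  by_contra hcon
  push_neg at hcon
  obtain ⟨qR, hqR⟩ := exists_wordLength_eq hU hUfin R
  have himg : (fun u => v * u) '' {g : A | wordLength U g ≤ R} ⊆
      {g : A | wordLength U g < R} := by
    rintro _ ⟨u, hu, rfl⟩
    exact hcon u hu
  have hfinR : {g : A | wordLength U g ≤ R}.Finite := ball_finite hU hUfin R
  have hfinm : {g : A | wordLength U g < R}.Finite :=
    hfinR.subset (Set.setOf_subset_setOf.mpr (fun g h => le_of_lt h))
  have h1 : ({g : A | wordLength U g ≤ R}).ncard ≤ ({g : A | wordLength U g < R}).ncard := by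
    have := Set.ncard_le_ncard himg hfinm
    rwa [Set.ncard_image_of_injective _ (mul_right_injective v)] at this
  have h2 : ({g : A | wordLength U g < R}).ncard < ({g : A | wordLength U g ≤ R}).ncard := by
    apply Set.ncard_lt_ncard ?_ hfinR
    constructor
    · exact Set.setOf_subset_setOf.mpr (fun g h => le_of_lt h)
    · intro hsub
      have h3 : qR ∈ {g : A | wordLength U g ≤ R} := by simp [hqR]
      have h4 := hsub h3
      simp only [Set.mem_setOf_eq, hqR] at h4
      omega
  omega

lemma word_prod_mem {T : Set G} {H : Subgroup G} (hTH : T ⊆ (H : Set G)) {l : List G}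
    (hw : IsWord T l) : l.prod ∈ H := by
  apply Subgroup.list_prod_mem
  intro x hx
  rcases hw x hx with h | h
  · exact hTH h
  · exact (H.inv_mem_iff).mp (hTH h)

lemma le_distortion {S T : Set G} {H : Subgroup G}
    (hSgen : Subgroup.closure S = ⊤) (hSfin : S.Finite)
    {k : G} (hk : k ∈ H) {m : ℕ} (hle : wordLength S k ≤ m) :
    wordLength T k ≤ distortion S T H m := by
  have hb : BddAbove {n | ∃ h ∈ H, wordLength S h ≤ m ∧ wordLength T h = n} := by
    apply Set.Finite.bddAbove
    have hsub : {n | ∃ h ∈ H, wordLength S h ≤ m ∧ wordLength T h = n} ⊆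
        (wordLength T) '' {g : G | wordLength S g ≤ m} := by
      rintro n ⟨h, _, h1, rfl⟩
      exact ⟨h, h1, rfl⟩
    exact ((ball_finite hSgen hSfin m).image _).subset hsub
  exact le_csSup hb ⟨k, hk, hle, rfl⟩

/-- there are elements of `H` of any exact `S`-word length -/
lemma exists_H_wordLength_eq {S T : Set G} {H : Subgroup G}
    (hSgen : Subgroup.closure S = ⊤) (hSfin : S.Finite)
    (hTS : T ⊆ S) (hTH : T ⊆ (H : Set G)) (hTgen : Subgroup.closure T = H)
    (hHinf : (H : Set G).Infinite) (n : ℕ) :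
    ∃ k : G, k ∈ H ∧ wordLength S k = n := by
  have hex : ∃ k₀, k₀ ∈ H ∧ n ≤ wordLength S k₀ := by
    by_contra h
    push_neg at h
    exact hHinf (Set.Finite.subset (ball_finite hSgen hSfin n)
      (fun g hg => (h g hg).le))
  obtain ⟨k₀, hk₀H, hk₀⟩ := hex
  obtain ⟨l, hw, hp, _⟩ := exists_min_word (S := T) (by rw [hTgen]; exact hk₀H)
  have hwS : IsWord S l := hw.mono hTS
  obtain ⟨j, _, hfj⟩ := ivt (fun j => wordLength S (l.take j).prod)
    (fun j => by simpa using prefix_step hSgen hwS 1 j) l.length n (by simp)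
    (by show n ≤ wordLength S (List.take l.length l).prod
        rw [List.take_length, hp]; omega)
  exact ⟨(l.take j).prod, word_prod_mem hTH (hw.take j), hfj⟩

/-- safety concatenation for walks -/
lemma safe_concat {P : G → Prop} {g : G} {l₁ l₂ : List G}
    (h₁ : ∀ j, P (g * (l₁.take j).prod))
    (h₂ : ∀ j, P ((g * l₁.prod) * (l₂.take j).prod)) :
    ∀ j, P (g * ((l₁ ++ l₂).take j).prod) := by
  intro j
  rw [List.take_append, List.prod_append]
  by_cases hj : j ≤ l₁.length
  · have hz : j - l₁.length = 0 := by omega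
    rw [hz]
    simpa using h₁ j
  · have hfull : l₁.take j = l₁ := List.take_of_length_le (by omega)
    rw [hfull, ← mul_assoc]
    exact h₂ _

lemma take_revinv_prod (l : List G) {j : ℕ} (hj : j ≤ l.length) :
    ((revinv l).take j).prod = ((l.drop (l.length - j)).prod)⁻¹ := by
  have h1 : (revinv l).take j = ((l.map fun x => x⁻¹).drop (l.length - j)).reverse := by
    unfold revinv
    rw [List.reverse_drop]
    congr 1
    simp
    omega
  rw [h1]
  have h2 : (l.drop (l.length - j)).map (fun x => x⁻¹) =
      (l.map fun x => x⁻¹).drop (l.length - j) := by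
    rw [List.map_drop]
  rw [← h2, ← List.prod_inv_reverse]

lemma safe_revinv {P : G → Prop} {a : G} {l : List G}
    (h : ∀ j, P (a * (l.take j).prod)) :
    ∀ j, P ((a * l.prod) * ((revinv l).take j).prod) := by
  intro j
  by_cases hj : j ≤ l.length
  · rw [take_revinv_prod l hj]
    have hsplit : l.prod = (l.take (l.length - j)).prod * (l.drop (l.length - j)).prod := by
      rw [← List.prod_append, List.take_append_drop]
    have key : a * l.prod * ((l.drop (l.length - j)).prod)⁻¹
        = a * (l.take (l.length - j)).prod := by
      rw [hsplit]; group
    rw [key]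
    exact h _
  · have hfull : (revinv l).take j = revinv l := List.take_of_length_le (by simp; omega)
    rw [hfull, revinv_prod]
    have key : a * l.prod * (l.prod)⁻¹ = a * (l.take 0).prod := by simp
    rw [key]
    exact h 0

end DivDistAux
namespace DivDistAux

/-- One side of the construction: from `x` of length `r`, a safe word leading into the
fiber of `q₀`, of controlled length. -/
lemma side_path {G : Type*} [Group G] (S T : Set G) (H : Subgroup G)
    (hSfin : S.Finite) (hSgen : Subgroup.closure S = ⊤)
    (hTS : T ⊆ S) (hTH : T ⊆ (H : Set G)) (hTgen : Subgroup.closure T = H)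
    [H.Normal] (hHinf : (H : Set G).Infinite)
    (hQgen : Subgroup.closure (⇑(QuotientGroup.mk' H) '' S) = ⊤)
    [Infinite (G ⧸ H)]
    (r R : ℕ) (hr : 0 < r) (hR : R = (r+1)/2)
    (q₀ : G ⧸ H) (hq₀ : wordLength (⇑(QuotientGroup.mk' H) '' S) q₀ = R)
    (x : G) (hx : wordLength S x = r) :
    ∃ (W : List G) (zx : G),
      IsWord S W ∧ x * W.prod = zx ∧ QuotientGroup.mk' H zx = q₀ ∧
      wordLength S zx ≤ 12*r + 1 ∧
      (∀ j, R ≤ wordLength S (x * (W.take j).prod)) ∧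
      W.length ≤ distortion S T H (32*r) + 3*r + 2 := by
  have hRr : 1 ≤ R ∧ R ≤ r ∧ r ≤ 2*R ∧ 2*R ≤ r + 1 := by omega
  set π := QuotientGroup.mk' H with hπdef
  set SQ : Set (G ⧸ H) := ⇑π '' S with hSQdef
  have hSQfin : SQ.Finite := hSfin.image _
  -- Step 1 : escape to a far fiber
  obtain ⟨e1, he1_le, he1_ge⟩ := escape_lemma hQgen hSQfin (π x) R
  obtain ⟨w1, hw1, hw1len₀, hw1prod⟩ := exists_lift π S hQgen e1
  have hw1len : w1.length = wordLength SQ e1 := hw1len₀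
  set z := x * w1.prod with hz
  have hπz : π z = π x * e1 := by rw [hz, map_mul, hw1prod]
  have hφz : R ≤ wordLength SQ (π z) := by rw [hπz]; exact he1_ge
  have hw1R : w1.length ≤ R := by omega
  have hzlen : wordLength S z ≤ r + R := by
    have h1 := wordLength_mul_le hSgen x w1.prod
    have h2 := wordLength_le hw1
    rw [hz]; omega
  have hsafe1 : ∀ j, R ≤ wordLength S (x * (w1.take j).prod) := by
    intro j
    by_cases hj : j < w1.length
    · have h1 : wordLength S ((w1.take j).prod) ≤ j := by
        have ha := wordLength_le (hw1.take j)
        have hb : (w1.take j).length ≤ j := List.length_take_le j w1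
        omega
      have h2 := wordLength_ge_left hSgen x ((w1.take j).prod)
      omega
    · have heq : w1.take j = w1 := List.take_of_length_le (by omega)
      rw [heq, ← hz]
      calc R ≤ wordLength SQ (π z) := hφz
        _ ≤ wordLength S z := wordLength_map_le π S (mem_closure_top hSgen z)
  -- Step 2 : gain length inside the coset of z, along a T-geodesic
  obtain ⟨k₀, hk₀H, hk₀len⟩ := exists_H_wordLength_eq hSgen hSfin hTS hTH hTgen hHinf (12*r)
  obtain ⟨lT, hlT, hlTprod, hlTlen⟩ := exists_min_word (S := T) (by rw [hTgen]; exact hk₀H)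
  have hlTS : IsWord S lT := hlT.mono hTS
  have hlTD : lT.length ≤ distortion S T H (32*r) := by
    rw [hlTlen]
    exact le_distortion hSgen hSfin hk₀H (by omega)
  have hf0 : wordLength S (z * (lT.take 0).prod) ≤ 10*r := by
    simp only [List.take_zero, List.prod_nil, mul_one]
    omega
  have hfN : 10*r ≤ wordLength S (z * (lT.take lT.length).prod) := by
    rw [List.take_length, hlTprod]
    have h1 := wordLength_ge_right hSgen z k₀
    omega
  obtain ⟨j₂, hj₂le, hj₂⟩ := ivt (fun j => wordLength S (z * (lT.take j).prod))
    (fun j => prefix_step hSgen hlTS z j) lT.length (10*r) hf0 hfN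
  have hj₂' : wordLength S (z * (lT.take j₂).prod) = 10*r := hj₂
  set w2 := lT.take j₂ with hw2def
  set P := z * w2.prod with hP
  have hw2T : IsWord T w2 := hlT.take j₂
  have hw2H : ∀ j, (w2.take j).prod ∈ H := fun j => word_prod_mem hTH (hw2T.take j)
  have hπP : π P = π z := by
    rw [hP, map_mul]
    have h1 : π w2.prod = 1 := by
      rw [hπdef, QuotientGroup.mk'_apply, QuotientGroup.eq_one_iff]
      exact word_prod_mem hTH hw2T
    rw [h1, mul_one]
  have hsafe2 : ∀ j, R ≤ wordLength S (z * (w2.take j).prod) := by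
    intro j
    have hπeq : π (z * (w2.take j).prod) = π z := by
      rw [map_mul]
      have h1 : π ((w2.take j).prod) = 1 := by
        rw [hπdef, QuotientGroup.mk'_apply, QuotientGroup.eq_one_iff]
        exact hw2H j
      rw [h1, mul_one]
    calc R ≤ wordLength SQ (π z) := hφz
      _ = wordLength SQ (π (z * (w2.take j).prod)) := by rw [hπeq]
      _ ≤ wordLength S (z * (w2.take j).prod) :=
          wordLength_map_le π S (mem_closure_top hSgen _)
  -- Step 3 : walk into the fiber of q₀
  have hφP_le : wordLength SQ (π P) ≤ r + R := by
    rw [hπP, hπz]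
    have h1 := wordLength_mul_le hQgen (π x) e1
    have h2 : wordLength SQ (π x) ≤ r := by
      have h3 : wordLength SQ (π x) ≤ wordLength S x :=
        wordLength_map_le π S (mem_closure_top hSgen x)
      omega
    omega
  set e2 := (π P)⁻¹ * q₀ with he2
  have he2len : wordLength SQ e2 ≤ 2*r + 1 := by
    have h1 := wordLength_mul_le hQgen (π P)⁻¹ q₀
    have h2 : wordLength SQ (π P)⁻¹ = wordLength SQ (π P) := wordLength_inv hQgen _
    rw [he2]; omega
  obtain ⟨w3, hw3, hw3len₀, hw3prod⟩ := exists_lift π S hQgen e2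
  have hw3len : w3.length = wordLength SQ e2 := hw3len₀
  set zx := P * w3.prod with hzx
  have hπzx : π zx = q₀ := by
    rw [hzx, map_mul, hw3prod, he2]
    group
  have hw3len' : w3.length ≤ 2*r + 1 := by omega
  have hsafe3 : ∀ j, R ≤ wordLength S (P * (w3.take j).prod) := by
    intro j
    have h1 : wordLength S ((w3.take j).prod) ≤ 2*r + 1 := by
      have ha := wordLength_le (hw3.take j)
      have hb : (w3.take j).length ≤ w3.length := by
        rw [List.length_take]; omega
      omega
    have h2 := wordLength_ge_left hSgen P ((w3.take j).prod)
    omega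
  have hzxlen : wordLength S zx ≤ 12*r + 1 := by
    have h1 := wordLength_mul_le hSgen P w3.prod
    have h2 := wordLength_le hw3
    rw [hzx]; omega
  -- Assemble
  refine ⟨w1 ++ (w2 ++ w3), zx, ?_, ?_, hπzx, hzxlen, ?_, ?_⟩
  · exact hw1.append ((hw2T.mono hTS).append hw3)
  · rw [List.prod_append, List.prod_append, hzx, hP, hz]
    group
  · have := safe_concat (P := fun g => R ≤ wordLength S g) hsafe1
      (by rw [← hz]
          exact safe_concat (P := fun g => R ≤ wordLength S g) hsafe2
            (by rw [← hP]; exact hsafe3))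
    exact this
  · simp only [List.length_append]
    have h2 : w2.length ≤ lT.length := by
      rw [hw2def, List.length_take]; omega
    omega

end DivDistAux
open DivDistAux
theorem stmt0 {G : Type*} [Group G] (S T : Set G) (H : Subgroup G)
    (hSfin : S.Finite) (hSgen : Subgroup.closure S = ⊤)
    (hTfin : T.Finite) (hTS : T ⊆ S) (hTH : T ⊆ (H : Set G))
    (hTgen : Subgroup.closure T = H)
    (hnormal : H.Normal) (hHinf : (H : Set G).Infinite) (hHindex : H.index = 0) :
    ∀ r : ℕ, 0 < r → ∀ x y : G, wordLength S x = r → wordLength S y = r →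
      ∃ (n : ℕ) (g : Fin (n + 1) → G),
        g 0 = x ∧ g (Fin.last n) = y ∧
        (∀ j : Fin n, (g j.castSucc)⁻¹ * g j.succ ∈ S ∪ S⁻¹) ∧
        (∀ j : Fin (n + 1), r ≤ 2 * wordLength S (g j)) ∧
        n ≤ 4 * distortion S T H (32 * r) + 12 * r := by
  haveI := hnormal
  intro r hr x y hx hy
  haveI hQinf : Infinite (G ⧸ H) := by
    have h0 : Nat.card (G ⧸ H) = 0 := hHindex
    rcases Nat.card_eq_zero.mp h0 with h | h
    · exact (h.elim (1 : G ⧸ H))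
    · exact h
  set π := QuotientGroup.mk' H with hπdef
  have hQgen : Subgroup.closure (⇑π '' S) = ⊤ := by
    rw [← MonoidHom.map_closure, hSgen]
    exact Subgroup.map_top_of_surjective _ (QuotientGroup.mk'_surjective H)
  have hSQfin : (⇑π '' S).Finite := hSfin.image _
  set R := (r+1)/2 with hRdef
  have hRr : 1 ≤ R ∧ R ≤ r ∧ r ≤ 2*R ∧ 2*R ≤ r + 1 := by omega
  obtain ⟨q₀, hq₀⟩ := exists_wordLength_eq hQgen hSQfin R
  obtain ⟨Wx, zx, hWxword, hWxprod, hπzx, hzxlen, hWxsafe, hWxlen⟩ :=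
    side_path S T H hSfin hSgen hTS hTH hTgen hHinf hQgen r R hr rfl q₀ hq₀ x hx
  obtain ⟨Wy, zy, hWyword, hWyprod, hπzy, hzylen, hWysafe, hWylen⟩ :=
    side_path S T H hSfin hSgen hTS hTH hTgen hHinf hQgen r R hr rfl q₀ hq₀ y hy
  -- middle T-segment
  set k := zx⁻¹ * zy with hkdef
  have hkH : k ∈ H := by
    have h1 : π k = 1 := by
      rw [hkdef, map_mul, map_inv, hπzx, hπzy]
      group
    rw [hπdef, QuotientGroup.mk'_apply, QuotientGroup.eq_one_iff] at h1
    exact h1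
  have hkS : wordLength S k ≤ 32*r := by
    have h1 := wordLength_mul_le hSgen zx⁻¹ zy
    have h2 : wordLength S zx⁻¹ = wordLength S zx := wordLength_inv hSgen _
    rw [hkdef]; omega
  obtain ⟨w4, hw4T, hw4prod, hw4len⟩ := exists_min_word (S := T) (by rw [hTgen]; exact hkH)
  have hw4D : w4.length ≤ distortion S T H (32*r) := by
    rw [hw4len]; exact le_distortion hSgen hSfin hkH hkS
  set W := Wx ++ (w4 ++ revinv Wy) with hWdef
  have hWword : IsWord S W := hWxword.append ((hw4T.mono hTS).append hWyword.revinv)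
  -- endpoint
  have hmid : zx * w4.prod = y * Wy.prod := by
    rw [hw4prod, hkdef, ← hWyprod]
    group
  have hprod : x * W.prod = y := by
    rw [hWdef, List.prod_append, List.prod_append, revinv_prod]
    calc x * (Wx.prod * (w4.prod * (Wy.prod)⁻¹))
        = ((x * Wx.prod) * w4.prod) * (Wy.prod)⁻¹ := by group
      _ = ((y * Wy.prod)) * (Wy.prod)⁻¹ := by rw [hWxprod, hmid]
      _ = y := by group
  -- safety of the middle segment
  have hsafe4 : ∀ j, R ≤ wordLength S (zx * (w4.take j).prod) := by
    intro j
    have hmem : (w4.take j).prod ∈ H := word_prod_mem hTH (hw4T.take j)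
    have hπeq : π (zx * (w4.take j).prod) = q₀ := by
      rw [map_mul, hπzx]
      have h1 : π ((w4.take j).prod) = 1 := by
        rw [hπdef, QuotientGroup.mk'_apply, QuotientGroup.eq_one_iff]
        exact hmem
      rw [h1, mul_one]
    calc R = wordLength (⇑π '' S) q₀ := hq₀.symm
      _ = wordLength (⇑π '' S) (π (zx * (w4.take j).prod)) := by rw [hπeq]
      _ ≤ wordLength S (zx * (w4.take j).prod) :=
          wordLength_map_le π S (mem_closure_top hSgen _)
  -- total safety
  have hWsafe : ∀ j, R ≤ wordLength S (x * (W.take j).prod) := by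
    have hs2 : ∀ j, R ≤ wordLength S ((zx * w4.prod) * ((revinv Wy).take j).prod) := by
      rw [hmid]
      exact safe_revinv (P := fun g => R ≤ wordLength S g) hWysafe
    have hs3 : ∀ j, R ≤ wordLength S (zx * ((w4 ++ revinv Wy).take j).prod) :=
      safe_concat (P := fun g => R ≤ wordLength S g) hsafe4 hs2
    have hs4 : ∀ j, R ≤ wordLength S (x * ((Wx ++ (w4 ++ revinv Wy)).take j).prod) :=
      safe_concat (P := fun g => R ≤ wordLength S g) hWxsafe
        (by rw [hWxprod]; exact hs3)
    rw [hWdef]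
    exact hs4
  -- total length
  have hWlen : W.length ≤ 4 * distortion S T H (32*r) + 12*r := by
    rw [hWdef]
    simp only [List.length_append, revinv_length]
    omega
  -- conversion to a Fin-indexed path
  refine ⟨W.length, fun i => x * (W.take i.val).prod, ?_, ?_, ?_, ?_, hWlen⟩
  · show x * (W.take (0 : Fin (W.length + 1)).val).prod = x
    simp
  · show x * (W.take (Fin.last W.length).val).prod = y
    simp only [Fin.val_last]
    rw [List.take_length]
    exact hprod
  · intro j
    have hjlt : (j : ℕ) < W.length := j.isLt
    have htake : W.take ((j : ℕ) + 1) = W.take (j : ℕ) ++ [W[(j : ℕ)]] := by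
      rw [List.take_succ, List.getElem?_eq_getElem hjlt]
      simp
    show (x * (W.take (j.castSucc : Fin (W.length + 1)).val).prod)⁻¹ *
        (x * (W.take (j.succ : Fin (W.length + 1)).val).prod) ∈ S ∪ S⁻¹
    simp only [Fin.coe_castSucc, Fin.val_succ]
    rw [htake, List.prod_append, List.prod_singleton]
    have hred : (x * (W.take (j : ℕ)).prod)⁻¹ *
        (x * ((W.take (j : ℕ)).prod * W[(j : ℕ)])) = W[(j : ℕ)] := by
      group
    rw [hred]
    rcases hWword _ (List.getElem_mem hjlt) with h | h
    · exact Set.mem_union_left _ h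
    · exact Set.mem_union_right _ (by simpa [Set.mem_inv] using h)
  · intro j
    show r ≤ 2 * wordLength S (x * (W.take (j : ℕ)).prod)
    have h1 := hWsafe (j : ℕ)
    omega
end

section
/- Let Γ be a connected finite simplicial graph with at least two vertices, let p : A_Γ → ℤ be a group homomorphism, and let N = ker p. Let Γ' be the induced subgraph of Γ on the vertices that p maps to nonzero integers. If Γ' is connected and every vertex of Γ either lies in Γ' or is adjacent to a vertex of Γ', then N is finitely generated and the distortion of N in A_Γ is at most quadratic, i.e. Dist_{A_Γ}^N ⪯ n². -/
/-- `f ⪯ g`. -/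
def Dominated (f g : ℕ → ℕ) : Prop :=
  ∃ A B C D : ℕ, 0 < A ∧ 0 < B ∧ 0 < C ∧ ∀ x : ℕ, D < x → f x ≤ A * g (B * x) + C * x

/-- The defining relators of the right-angled Artin group of a graph `Γ`. -/
def raagRels {V : Type*} (Γ : SimpleGraph V) : Set (FreeGroup V) :=
  {r | ∃ u v : V, Γ.Adj u v ∧
    r = FreeGroup.of u * FreeGroup.of v * (FreeGroup.of u)⁻¹ * (FreeGroup.of v)⁻¹}

/-- The right-angled Artin group of a graph `Γ`. -/
abbrev RAAG {V : Type*} (Γ : SimpleGraph V) : Type _ := PresentedGroup (raagRels Γ)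

/-- The standard generator of `RAAG Γ` associated to a vertex. -/
def raagGen {V : Type*} (Γ : SimpleGraph V) (v : V) : RAAG Γ := PresentedGroup.of v


set_option linter.unusedSectionVars false
set_option maxHeartbeats 1000000

namespace Stmt3Aux

variable {G : Type*} [Group G]

/-- `g` is a product of at most `n` letters from `S ∪ S⁻¹`. -/
def HasWord (S : Set G) (g : G) (n : ℕ) : Prop :=
  ∃ l : List G, l.length ≤ n ∧ (∀ x ∈ l, x ∈ S ∨ x⁻¹ ∈ S) ∧ l.prod = g

theorem hasWord_one (S : Set G) : HasWord S 1 0 := ⟨[], by simp, by simp, rfl⟩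

theorem HasWord.mono {S : Set G} {g : G} {m n : ℕ} (h : HasWord S g m) (hmn : m ≤ n) :
    HasWord S g n := by
  obtain ⟨l, h1, h2, h3⟩ := h
  exact ⟨l, h1.trans hmn, h2, h3⟩

theorem HasWord.mul {S : Set G} {g h : G} {m n : ℕ} (hg : HasWord S g m) (hh : HasWord S h n) :
    HasWord S (g * h) (m + n) := by
  obtain ⟨l, h1, h2, h3⟩ := hg
  obtain ⟨l', h1', h2', h3'⟩ := hh
  refine ⟨l ++ l', ?_, ?_, by simp [h3, h3']⟩
  · simpa using Nat.add_le_add h1 h1'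
  · intro x hx; rcases List.mem_append.1 hx with h | h
    · exact h2 x h
    · exact h2' x h

theorem HasWord.inv {S : Set G} {g : G} {n : ℕ} (hg : HasWord S g n) : HasWord S g⁻¹ n := by
  obtain ⟨l, h1, h2, h3⟩ := hg
  refine ⟨(l.map (·⁻¹)).reverse, by simpa using h1, ?_, ?_⟩
  · intro x hx
    simp only [List.mem_reverse, List.mem_map] at hx
    obtain ⟨y, hy, rfl⟩ := hx
    rcases h2 y hy with h | h
    · right; simpa using h
    · left; simpa using h
  · rw [← h3, List.prod_inv_reverse]

theorem hasWord_of_mem {S : Set G} {g : G} (hg : g ∈ S) : HasWord S g 1 :=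
  ⟨[g], by simp, by simp [hg], by simp⟩

theorem hasWord_zpow {S : Set G} {g : G} (hg : g ∈ S) (n : ℤ) :
    HasWord S (g ^ n) n.natAbs := by
  rcases Int.natAbs_eq n with h | h
  · rw [h, zpow_natCast]
    induction n.natAbs with
    | zero => simpa using hasWord_one S
    | succ k ih => rw [pow_succ]; exact (ih.mul (hasWord_of_mem hg)).mono (by omega)
  · rw [h, zpow_neg, zpow_natCast]
    refine HasWord.inv ?_
    induction n.natAbs with
    | zero => simpa using hasWord_one S
    | succ k ih => rw [pow_succ]; exact (ih.mul (hasWord_of_mem hg)).mono (by omega)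

theorem wordLength_le_of_hasWord {S : Set G} {g : G} {n : ℕ} (h : HasWord S g n) :
    wordLength S g ≤ n := by
  obtain ⟨l, h1, h2, h3⟩ := h
  exact le_trans (Nat.sInf_le ⟨l, rfl, h2, h3⟩) h1

theorem hasWord_wordLength {S : Set G} {g : G} (h : ∃ n, HasWord S g n) :
    HasWord S g (wordLength S g) := by
  obtain ⟨n, l, h1, h2, h3⟩ := h
  have hne : {n | ∃ l : List G, l.length = n ∧ (∀ x ∈ l, x ∈ S ∨ x⁻¹ ∈ S) ∧ l.prod = g}.Nonempty :=
    ⟨l.length, l, rfl, h2, h3⟩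
  obtain ⟨l', hl1, hl2, hl3⟩ := Nat.sInf_mem hne
  exact ⟨l', le_of_eq hl1, hl2, hl3⟩

theorem mem_closure_of_hasWord {S : Set G} {g : G} {n : ℕ} (h : HasWord S g n) :
    g ∈ Subgroup.closure S := by
  obtain ⟨l, _, h2, h3⟩ := h
  rw [← h3]
  refine Subgroup.list_prod_mem _ fun x hx => ?_
  rcases h2 x hx with h | h
  · exact Subgroup.subset_closure h
  · simpa using Subgroup.inv_mem _ (Subgroup.subset_closure h)

theorem hasWord_of_mem_closure {S : Set G} {g : G} (h : g ∈ Subgroup.closure S) :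
    ∃ n, HasWord S g n := by
  rw [← Subgroup.mem_toSubmonoid, Subgroup.closure_toSubmonoid] at h
  obtain ⟨l, hl, hp⟩ := Submonoid.exists_list_of_mem_closure h
  refine ⟨l.length, l, le_rfl, ?_, hp⟩
  intro x hx
  rcases hl x hx with h | h
  · exact Or.inl h
  · exact Or.inr (by simpa using h)

/-- Words over a bigger alphabet, each of whose letters has a word over `T`. -/
theorem hasWord_trans {S T : Set G} {g : G} {n M : ℕ}
    (h : HasWord S g n) (hST : ∀ s ∈ S, HasWord T s M) :
    HasWord T g (M * n) := by
  obtain ⟨l, h1, h2, h3⟩ := h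
  subst h3
  have key : ∀ l' : List G, (∀ x ∈ l', x ∈ S ∨ x⁻¹ ∈ S) → HasWord T l'.prod (M * l'.length) := by
    intro l' hl'
    induction l' with
    | nil => simpa using hasWord_one T
    | cons x l' ih =>
      have hx : HasWord T x M := by
        rcases hl' x (by simp) with h | h
        · exact hST x h
        · simpa using (hST _ h).inv
      have hl : HasWord T l'.prod (M * l'.length) := ih fun y hy => hl' y (by simp [hy])
      rw [List.prod_cons]
      refine (hx.mul hl).mono ?_
      simp only [List.length_cons, Nat.mul_succ, Nat.mul_add]
      omega
  exact (key l h2).mono (Nat.mul_le_mul_left M h1)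

theorem finite_ball {S : Set G} (hS : S.Finite) (n : ℕ) :
    {g : G | HasWord S g n}.Finite := by
  induction n with
  | zero =>
    refine Set.Finite.subset (Set.finite_singleton 1) ?_
    rintro g ⟨l, h1, _, h3⟩
    simp only [Nat.le_zero, List.length_eq_zero_iff] at h1
    subst h1; simp at h3; simp [← h3]
  | succ k ih =>
    have : {g : G | HasWord S g (k+1)} ⊆
        {g : G | HasWord S g k} ∪ Set.image2 (· * ·) (S ∪ S⁻¹) {g : G | HasWord S g k} := by
      rintro g ⟨l, h1, h2, h3⟩
      match l with
      | [] => exact Or.inl ⟨[], by simp, by simp, h3⟩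
      | x :: l' =>
        right
        refine ⟨x, ?_, l'.prod, ⟨l', by simpa using h1, fun y hy => h2 y (by simp [hy]), rfl⟩, by
          simpa using h3⟩
        rcases h2 x (by simp) with h | h
        · exact Or.inl h
        · exact Or.inr (by simpa using h)
    exact Set.Finite.subset (ih.union (Set.Finite.image2 _ (hS.union hS.inv) ih)) this

section RaagSetup

variable {V : Type*} [Fintype V] {Γ : SimpleGraph V} (p : RAAG Γ →* Multiplicative ℤ)

local notation "A" => RAAG Γ
local notation "x" => raagGen Γ

/-- generators commute along edges -/
theorem commute_of_adj {u v : V} (h : Γ.Adj u v) : Commute (x u) (x v) := by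
  rw [← commutatorElement_eq_one_iff_commute]
  have hrel : (PresentedGroup.mk (raagRels Γ))
      (FreeGroup.of u * FreeGroup.of v * (FreeGroup.of u)⁻¹ * (FreeGroup.of v)⁻¹) = 1 := by
    apply (QuotientGroup.eq_one_iff _).2
    exact Subgroup.subset_normalClosure ⟨u, v, h, rfl⟩
  simpa [commutatorElement_def, map_mul, map_inv, raagGen, PresentedGroup.of] using hrel

/-- the additive height -/
def htp (g : A) : ℤ := Multiplicative.toAdd (p g)

theorem htp_mul (g h : A) : htp p (g * h) = htp p g + htp p h := by simp [htp]
theorem htp_inv (g : A) : htp p g⁻¹ = - htp p g := by simp [htp]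
theorem htp_one : htp p (1 : A) = 0 := by simp [htp]
theorem htp_zpow (g : A) (n : ℤ) : htp p (g ^ n) = n * htp p g := by simp [htp]
theorem mem_ker_iff (g : A) : g ∈ p.ker ↔ htp p g = 0 := by
  rw [MonoidHom.mem_ker]
  constructor
  · intro h; simp [htp, h]
  · intro h
    have : Multiplicative.toAdd (p g) = Multiplicative.toAdd (1 : Multiplicative ℤ) := by
      simpa [htp] using h
    exact Multiplicative.toAdd.injective this

/-- vertex heights -/
def pv (v : V) : ℤ := htp p (x v)

/-- max vertex height -/
def mp : ℕ := (Finset.univ.sup fun v : V => (pv p v).natAbs) + 1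

theorem pv_le_mp (v : V) : (pv p v).natAbs ≤ mp p := by
  have : (pv p v).natAbs ≤ Finset.univ.sup fun v : V => (pv p v).natAbs :=
    Finset.le_sup (f := fun v : V => (pv p v).natAbs) (Finset.mem_univ v)
  unfold mp; omega

theorem one_le_mp : 1 ≤ mp p := Nat.le_add_left 1 _

/-- the standard generating set -/
def Sgen : Set A := Set.range (x)

theorem htp_letter {y : A} (hy : y ∈ Sgen (Γ := Γ) ∨ y⁻¹ ∈ Sgen (Γ := Γ)) :
    (htp p y).natAbs ≤ mp p := by
  rcases hy with ⟨v, rfl⟩ | h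
  · exact pv_le_mp p v
  · obtain ⟨v, hv⟩ := h
    have hy : y = (x v)⁻¹ := by
      have := congrArg (·⁻¹) hv
      simpa using this.symm
    subst hy
    rw [htp_inv]
    simpa [pv] using pv_le_mp p v

theorem htp_hasWord {g : A} {n : ℕ} (h : HasWord (Sgen (Γ := Γ)) g n) :
    (htp p g).natAbs ≤ mp p * n := by
  obtain ⟨l, h1, h2, h3⟩ := h
  subst h3
  have key : ∀ l' : List (RAAG Γ), (∀ y ∈ l', y ∈ Sgen (Γ := Γ) ∨ y⁻¹ ∈ Sgen (Γ := Γ)) →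
      (htp p l'.prod).natAbs ≤ mp p * l'.length := by
    intro l' hl'
    induction l' with
    | nil => simp [htp_one]
    | cons y l' ih =>
      rw [List.prod_cons, htp_mul]
      have h1 := htp_letter p (hl' y (by simp))
      have h2 := ih fun z hz => hl' z (by simp [hz])
      calc (htp p y + htp p l'.prod).natAbs ≤ (htp p y).natAbs + (htp p l'.prod).natAbs :=
            Int.natAbs_add_le _ _
        _ ≤ mp p * (y :: l').length := by simp only [List.length_cons, Nat.mul_succ]; omega
  exact le_trans (key l h2) (Nat.mul_le_mul_left _ h1)

theorem expressible (g : A) : ∃ n, HasWord (Sgen (Γ := Γ)) g n := by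
  let H : Subgroup A :=
    { carrier := {g | ∃ n, HasWord (Sgen (Γ := Γ)) g n}
      one_mem' := ⟨0, hasWord_one _⟩
      mul_mem' := fun ⟨m, hm⟩ ⟨n, hn⟩ => ⟨m + n, hm.mul hn⟩
      inv_mem' := fun ⟨n, hn⟩ => ⟨n, hn.inv⟩ }
  exact PresentedGroup.generated_by (raagRels Γ) H
    (fun j => ⟨1, hasWord_of_mem ⟨j, rfl⟩⟩) g

/-! ### Lattice constants -/

/-- product of all nonzero vertex heights -/
def Pbig : ℤ := ∏ v : V, (if pv p v = 0 then 1 else pv p v)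

theorem Pbig_ne_zero : Pbig p ≠ 0 := by
  rw [Pbig, Finset.prod_ne_zero_iff]
  intro v _
  split <;> simp_all

theorem pv_dvd_Pbig {v : V} (hv : pv p v ≠ 0) : pv p v ∣ Pbig p := by
  have : (if pv p v = 0 then 1 else pv p v) = pv p v := by simp [hv]
  rw [Pbig]
  calc pv p v ∣ (if pv p v = 0 then 1 else pv p v) := by rw [this]
    _ ∣ _ := Finset.dvd_prod_of_mem (fun v => if pv p v = 0 then 1 else pv p v)
      (Finset.mem_univ v)

/-- `Pn` : natAbs of `Pbig` -/
def Pn : ℕ := (Pbig p).natAbs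

theorem one_le_Pn : 1 ≤ Pn p := by
  have := Pbig_ne_zero p
  rw [Pn]; omega

/-- the co-exponent at a vertex -/
def Qv (v : V) : ℤ := Pbig p / pv p v

theorem Qv_mul {v : V} (hv : pv p v ≠ 0) : pv p v * Qv p v = Pbig p :=
  Int.mul_ediv_cancel' (pv_dvd_Pbig p hv)

theorem Qv_ne_zero {v : V} (hv : pv p v ≠ 0) : Qv p v ≠ 0 := by
  intro h
  have := Qv_mul p hv
  rw [h] at this
  exact Pbig_ne_zero p (by simpa using this.symm)

theorem Qv_natAbs_le {v : V} (hv : pv p v ≠ 0) : (Qv p v).natAbs ≤ Pn p := by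
  have h := Qv_mul p hv
  have : (pv p v).natAbs * (Qv p v).natAbs = Pn p := by
    rw [Pn, ← h, Int.natAbs_mul]
  nlinarith [Int.natAbs_pos.2 hv, Int.natAbs_pos.2 (Qv_ne_zero p hv)]

/-- the edge generator -/
def zeta (a b : V) : RAAG Γ := x a ^ Qv p a * (x b ^ Qv p b)⁻¹

theorem zeta_mem_ker {a b : V} (ha : pv p a ≠ 0) (hb : pv p b ≠ 0) :
    zeta p a b ∈ p.ker := by
  rw [mem_ker_iff, zeta, htp_mul, htp_inv, htp_zpow, htp_zpow]
  have h1 := Qv_mul p ha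
  have h2 := Qv_mul p hb
  rw [show Qv p a * htp p (x a) = pv p a * Qv p a from mul_comm _ _,
    show Qv p b * htp p (x b) = pv p b * Qv p b from mul_comm _ _, h1, h2]
  ring

theorem zeta_hasWord {a b : V} (ha : pv p a ≠ 0) (hb : pv p b ≠ 0) :
    HasWord (Sgen (Γ := Γ)) (zeta p a b) (2 * Pn p) := by
  have h1 : (x a : RAAG Γ) ∈ Sgen (Γ := Γ) := ⟨a, rfl⟩
  have h2 : (x b : RAAG Γ) ∈ Sgen (Γ := Γ) := ⟨b, rfl⟩
  refine (HasWord.mul (hasWord_zpow h1 _) (HasWord.inv (hasWord_zpow h2 _))).mono ?_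
  have := Qv_natAbs_le p ha
  have := Qv_natAbs_le p hb
  omega

theorem edge_transport {a b : V} (hadj : Γ.Adj a b) (m : ℤ) :
    x a ^ (m * Qv p a) = zeta p a b ^ m * x b ^ (m * Qv p b) := by
  have hc : Commute ((x a) ^ Qv p a) ((x b) ^ Qv p b) :=
    (commute_of_adj hadj).zpow_zpow _ _
  have h1 : zeta p a b ^ m = (x a) ^ (Qv p a * m) * ((x b) ^ (Qv p b * m))⁻¹ := by
    rw [zeta, hc.inv_right.mul_zpow, ← zpow_mul, ← zpow_neg, ← zpow_mul]
    rw [show -(Qv p b) * m = -(Qv p b * m) by ring, zpow_neg]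
  rw [h1, show Qv p a * m = m * Qv p a from mul_comm _ _,
    show Qv p b * m = m * Qv p b from mul_comm _ _]
  group

/-! ### The `Good` predicate -/

/-- the candidate generating set : kernel elements of length at most `β` -/
def T0 (β : ℕ) : Set (RAAG Γ) := {g | g ∈ p.ker ∧ HasWord (Sgen (Γ := Γ)) g β}

theorem T0_subset_ker (β : ℕ) : T0 p β ⊆ (p.ker : Set (RAAG Γ)) := fun _ h => h.1

theorem T0_finite (β : ℕ) : (T0 p β).Finite := by
  refine Set.Finite.subset (finite_ball (S := Sgen (Γ := Γ)) ?_ β) ?_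
  · exact Set.finite_range _
  · exact fun g hg => hg.2

theorem hasWordT0_mem_ker {β c : ℕ} {g : RAAG Γ} (h : HasWord (T0 p β) g c) : g ∈ p.ker := by
  have := mem_closure_of_hasWord h
  exact (Subgroup.closure_le _ |>.2 (T0_subset_ker p β)) this

/-- `W` splits as (word in `T0` of length `c`) * (junk word of length `a`) -/
def Good (β a c : ℕ) (W : RAAG Γ) : Prop :=
  ∃ g r, W = g * r ∧ HasWord (T0 p β) g c ∧ HasWord (Sgen (Γ := Γ)) r a

theorem good_one (β : ℕ) : Good p β 0 0 1 :=
  ⟨1, 1, by simp, hasWord_one _, hasWord_one _⟩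

theorem Good.mono {β a c a' c' : ℕ} {W : RAAG Γ} (h : Good p β a c W)
    (ha : a ≤ a') (hc : c ≤ c') : Good p β a' c' W := by
  obtain ⟨g, r, h1, h2, h3⟩ := h
  exact ⟨g, r, h1, h2.mono hc, h3.mono ha⟩

theorem Good.junk {β a c b : ℕ} {W j : RAAG Γ} (h : Good p β a c W)
    (hj : HasWord (Sgen (Γ := Γ)) j b) : Good p β (a + b) c (W * j) := by
  obtain ⟨g, r, h1, h2, h3⟩ := h
  exact ⟨g, r * j, by rw [h1, mul_assoc], h2, h3.mul hj⟩

theorem Good.genpow {β a c zb : ℕ} {W z : RAAG Γ} (hW : Good p β a c W)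
    (hz : z ∈ p.ker) (hzw : HasWord (Sgen (Γ := Γ)) z zb) (hβ : 2 * a + zb ≤ β) (n : ℤ) :
    Good p β a (c + n.natAbs) (W * z ^ n) := by
  obtain ⟨g, r, h1, h2, h3⟩ := hW
  have hy : r * z * r⁻¹ ∈ T0 p β := by
    refine ⟨?_, ((h3.mul hzw).mul h3.inv).mono (by omega)⟩
    exact (MonoidHom.normal_ker p).conj_mem z hz r
  refine ⟨g * (r * z * r⁻¹) ^ n, r, ?_, h2.mul (hasWord_zpow hy n), h3⟩
  rw [h1, conj_zpow]
  group

theorem Good.htp_natAbs {β a c : ℕ} {W : RAAG Γ} (h : Good p β a c W) :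
    (htp p W).natAbs ≤ mp p * a := by
  obtain ⟨g, r, h1, h2, h3⟩ := h
  have hg : htp p g = 0 := (mem_ker_iff p g).1 (hasWordT0_mem_ker p h2)
  rw [h1, htp_mul, hg, zero_add]
  exact htp_hasWord p h3

theorem Good.peel {β a c : ℕ} {W : RAAG Γ} (h : Good p β a c W)
    (hker : W ∈ p.ker) (hab : a ≤ β) : HasWord (T0 p β) W (c + 1) := by
  obtain ⟨g, r, h1, h2, h3⟩ := h
  have hgker : g ∈ p.ker := hasWordT0_mem_ker p h2
  have hr : r ∈ T0 p β := by
    refine ⟨?_, h3.mono hab⟩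
    have : r = g⁻¹ * W := by rw [h1]; group
    rw [this]
    exact p.ker.mul_mem (p.ker.inv_mem hgker) hker
  rw [h1]
  exact h2.mul (hasWord_of_mem hr)

/-! ### Graph transport -/

/-- the set of living vertices -/
def Lset : Set V := {v | pv p v ≠ 0}

theorem Lset_eq : {v : V | p (raagGen Γ v) ≠ 1} = Lset p := by
  ext v
  simp only [Set.mem_setOf_eq, Lset]
  constructor
  · intro h h'
    exact h (by rw [show p (raagGen Γ v) = 1 ↔ raagGen Γ v ∈ p.ker from Iff.rfl,
      mem_ker_iff]; exact h')
  · intro h h'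
    exact h ((mem_ker_iff p _).1 h')

theorem exists_walk (hc : (Γ.induce (Lset p)).Connected) (a b : ↥(Lset p)) :
    ∃ w : (Γ.induce (Lset p)).Walk a b, w.length ≤ Fintype.card V := by
  classical
  obtain ⟨w0⟩ := hc.preconnected a b
  have : Fintype ↥(Lset p) := Fintype.ofFinite _
  refine ⟨w0.toPath, ?_⟩
  have h1 : (w0.toPath : (Γ.induce (Lset p)).Walk a b).length < Fintype.card ↥(Lset p) :=
    SimpleGraph.Walk.IsPath.length_lt w0.toPath.2
  have h2 : Fintype.card ↥(Lset p) ≤ Fintype.card V :=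
    Fintype.card_le_of_injective Subtype.val Subtype.val_injective
  omega

theorem trans_core {β : ℕ} {a b : ↥(Lset p)} (w : (Γ.induce (Lset p)).Walk a b) (m : ℤ) :
    ∀ {aj c : ℕ} {W : RAAG Γ}, Good p β aj c W → 2 * aj + 2 * Pn p ≤ β →
    ∃ W', W * x ↑a ^ (m * Qv p ↑a) = W' * x ↑b ^ (m * Qv p ↑b) ∧
      Good p β aj (c + w.length * m.natAbs) W' := by
  induction w with
  | nil => intro aj c W hW _; exact ⟨W, rfl, by simpa using hW⟩
  | @cons u v' b hadj q ih =>
    intro aj c W hW hβ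
    have hadj' : Γ.Adj ↑u ↑v' := by simpa using hadj
    have hWz : Good p β aj (c + m.natAbs) (W * zeta p ↑u ↑v' ^ m) :=
      hW.genpow (p := p) (zb := 2 * Pn p) (zeta_mem_ker p u.2 v'.2)
        (zeta_hasWord p u.2 v'.2) (by omega) m
    obtain ⟨W', hEq, hG⟩ := ih hWz hβ
    refine ⟨W', ?_, hG.mono (p := p) le_rfl ?_⟩
    · rw [edge_transport p hadj' m, ← mul_assoc, hEq]
    · rw [SimpleGraph.Walk.length_cons, Nat.succ_mul]
      omega

theorem trans {β : ℕ} (hc : (Γ.induce (Lset p)).Connected) {a b : V}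
    (ha : pv p a ≠ 0) (hb : pv p b ≠ 0) (E : ℤ)
    {aj c : ℕ} {W : RAAG Γ} (hW : Good p β aj c W)
    (hβ : 2 * (aj + Pn p) + 2 * Pn p ≤ β) :
    ∃ W' m, W * x a ^ E = W' * x b ^ (m * Qv p b) ∧
      Good p β (aj + Pn p) (c + Fintype.card V * (E.natAbs + Pn p)) W' ∧
      m.natAbs ≤ E.natAbs + Pn p := by
  set α := E % Qv p a with hαdef
  set m := E / Qv p a with hmdef
  have hQa := Qv_ne_zero p ha
  have hQaPn := Qv_natAbs_le p ha
  have hα0 : 0 ≤ α := Int.emod_nonneg E hQa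
  have hαlt : α.natAbs ≤ Pn p := by
    have h1 : E % Qv p a = E % |Qv p a| := by
      rcases le_or_gt 0 (Qv p a) with h | h
      · rw [abs_of_nonneg h]
      · rw [abs_of_neg h, Int.emod_neg]
    have h2 : E % |Qv p a| < |Qv p a| := Int.emod_lt_of_pos E (abs_pos.2 hQa)
    have h3 : |Qv p a| = ((Qv p a).natAbs : ℤ) := by
      rw [Int.abs_eq_natAbs]
    omega
  have hsum : α + Qv p a * m = E := Int.emod_add_mul_ediv E (Qv p a)
  have hm : m.natAbs ≤ E.natAbs + Pn p := by
    have h1 : (Qv p a * m).natAbs = (Qv p a).natAbs * m.natAbs := Int.natAbs_mul _ _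
    have h2 : (Qv p a * m).natAbs ≤ E.natAbs + α.natAbs := by
      have hEα : Qv p a * m = E - α := by linarith [hsum]
      rw [hEα]
      exact Int.natAbs_sub_le _ _
    have h4 : 1 ≤ (Qv p a).natAbs := Int.natAbs_pos.2 hQa
    have h5 : m.natAbs ≤ (Qv p a).natAbs * m.natAbs := Nat.le_mul_of_pos_left _ h4
    omega
  have hsplit : (x a : RAAG Γ) ^ E = x a ^ α * x a ^ (m * Qv p a) := by
    rw [← zpow_add]
    congr 1
    rw [show m * Qv p a = Qv p a * m from mul_comm _ _]
    linarith [hsum]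
  have hxa : (x a : RAAG Γ) ∈ Sgen (Γ := Γ) := ⟨a, rfl⟩
  have hWj : Good p β (aj + Pn p) c (W * x a ^ α) :=
    hW.junk (p := p) ((hasWord_zpow hxa α).mono hαlt)
  obtain ⟨w, hwlen⟩ := exists_walk p hc ⟨a, ha⟩ ⟨b, hb⟩
  obtain ⟨W', hEq, hG⟩ := trans_core p w m hWj (by omega)
  refine ⟨W', m, ?_, hG.mono (p := p) le_rfl ?_, hm⟩
  · rw [hsplit, ← mul_assoc]
    exact hEq
  · have : w.length * m.natAbs ≤ Fintype.card V * (E.natAbs + Pn p) :=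
      Nat.mul_le_mul hwlen hm
    omega

/-! ### Letter processing -/

theorem ml_arith (KK Nv Pn k E E2 : ℕ) (hKK : Nv * (Pn + 1) + Pn ^ 2 + Pn + 2 ≤ KK)
    (hE2 : E2 ≤ Pn * (E + Pn) + 1) :
    Nv * (E + Pn) + KK ^ (k + 1) * (E2 + 1) ≤ KK ^ (k + 2) * (E + 1) ∧
      KK ^ (k + 1) * (E2 + 1) ≤ KK ^ (k + 2) * (E + 1) := by
  have hKKpos : 0 < KK := by nlinarith
  have h6 : 1 ≤ KK ^ (k + 1) := Nat.one_le_pow _ _ hKKpos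
  have A1 : E2 + 1 ≤ (Pn ^ 2 + Pn + 2) * (E + 1) := by nlinarith
  have A2 : KK ^ (k + 1) * (E2 + 1) ≤ KK ^ (k + 1) * ((Pn ^ 2 + Pn + 2) * (E + 1)) :=
    Nat.mul_le_mul_left _ A1
  have A3 : Nv * (E + Pn) ≤ Nv * (Pn + 1) * (E + 1) := by
    have h : E + Pn ≤ (Pn + 1) * (E + 1) := by nlinarith
    calc Nv * (E + Pn) ≤ Nv * ((Pn + 1) * (E + 1)) := Nat.mul_le_mul_left _ h
      _ = Nv * (Pn + 1) * (E + 1) := by ring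
  have A6 : Nv * (Pn + 1) + KK ^ (k + 1) * (Pn ^ 2 + Pn + 2) ≤ KK ^ (k + 1) * KK := by
    have h7 : Nv * (Pn + 1) ≤ KK ^ (k + 1) * (Nv * (Pn + 1)) := Nat.le_mul_of_pos_left _ (by omega)
    nlinarith
  have key : Nv * (Pn + 1) * (E + 1) + KK ^ (k + 1) * ((Pn ^ 2 + Pn + 2) * (E + 1)) ≤
      KK ^ (k + 2) * (E + 1) := by
    have := Nat.mul_le_mul_right (E + 1) A6
    calc Nv * (Pn + 1) * (E + 1) + KK ^ (k + 1) * ((Pn ^ 2 + Pn + 2) * (E + 1))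
        = (Nv * (Pn + 1) + KK ^ (k + 1) * (Pn ^ 2 + Pn + 2)) * (E + 1) := by ring
      _ ≤ KK ^ (k + 1) * KK * (E + 1) := this
      _ = KK ^ (k + 2) * (E + 1) := by ring
  omega

/-- the cost base constant -/
def KK : ℕ := Fintype.card V * (Pn p + 1) + Pn p ^ 2 + Pn p + 2

theorem ml {β : ℕ} (hc : (Γ.induce (Lset p)).Connected)
    (hstar' : ∀ v : V, pv p v ≠ 0 ∨ ∃ u : V, pv p u ≠ 0 ∧ Γ.Adj v u)
    (l : List (RAAG Γ)) :
    (∀ y ∈ l, ∃ (w : V) (δ : ℤ), δ.natAbs ≤ 1 ∧ y = x w ^ δ) →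
    ∀ {v : V}, pv p v ≠ 0 → ∀ (E : ℤ) {aj c : ℕ} {W : RAAG Γ}, Good p β aj c W →
    2 * (aj + (Pn p + 1) * (l.length + 1)) + 2 * Pn p ≤ β →
    ∃ W' u m, pv p u ≠ 0 ∧
      W * x v ^ E * l.prod = W' * x u ^ (m * Qv p u) ∧
      Good p β (aj + (Pn p + 1) * (l.length + 1)) (c + KK p ^ (l.length + 1) * (E.natAbs + 1)) W' ∧
      m.natAbs ≤ KK p ^ (l.length + 1) * (E.natAbs + 1) := by
  induction l with
  | nil =>
    intro _ v hv E aj c W hW hβ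
    have hj : (Pn p + 1) * (List.length ([] : List (RAAG Γ)) + 1) = Pn p + 1 := by simp
    obtain ⟨W', m, hEq, hG, hm⟩ := trans p hc hv hv E hW (by omega)
    have hE1 : E.natAbs + Pn p ≤ (Pn p + 1) * (E.natAbs + 1) := by
      have : (Pn p + 1) * (E.natAbs + 1) = Pn p * E.natAbs + Pn p + E.natAbs + 1 := by ring
      omega
    have hKK1 : Fintype.card V * (Pn p + 1) ≤ KK p := by rw [KK]; omega
    have hKKpos : 0 < KK p := by rw [KK]; omega
    have hpow1 : KK p ^ (List.length ([] : List (RAAG Γ)) + 1) = KK p := by simp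
    have hcost : Fintype.card V * (E.natAbs + Pn p) ≤
        KK p ^ (List.length ([] : List (RAAG Γ)) + 1) * (E.natAbs + 1) := by
      rw [hpow1]
      calc Fintype.card V * (E.natAbs + Pn p)
          ≤ Fintype.card V * ((Pn p + 1) * (E.natAbs + 1)) := Nat.mul_le_mul_left _ hE1
        _ = Fintype.card V * (Pn p + 1) * (E.natAbs + 1) := by ring
        _ ≤ KK p * (E.natAbs + 1) := Nat.mul_le_mul_right _ hKK1
    have hmb : E.natAbs + Pn p ≤ KK p ^ (List.length ([] : List (RAAG Γ)) + 1) * (E.natAbs + 1) := by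
      rw [hpow1]
      have h1 : Pn p + 1 ≤ KK p := by rw [KK]; nlinarith
      calc E.natAbs + Pn p ≤ (Pn p + 1) * (E.natAbs + 1) := hE1
        _ ≤ KK p * (E.natAbs + 1) := Nat.mul_le_mul_right _ h1
    exact ⟨W', v, m, hv, by simpa using hEq, hG.mono (p := p) (by omega) (by omega), by omega⟩
  | cons y l' ih =>
    intro hl v hv E aj c W hW hβ
    obtain ⟨w, δ, hδ, rfl⟩ := hl y (by simp)
    have hlen : (x w ^ δ :: l').length = l'.length + 1 := rfl
    have hexp : (Pn p + 1) * ((x w ^ δ :: l').length + 1) =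
        (Pn p + 1) * (l'.length + 1) + (Pn p + 1) := by rw [hlen]; ring
    have hpow : KK p ^ (l'.length + 2) = KK p ^ ((x w ^ δ :: l').length + 1) := by
      rw [hlen]
    have hpow2 : KK p ^ (l'.length + 2) * (E.natAbs + 1)
        = KK p ^ ((x w ^ δ :: l').length + 1) * (E.natAbs + 1) := by rw [hpow]
    have hKKarith : Fintype.card V * (Pn p + 1) + Pn p ^ 2 + Pn p + 2 ≤ KK p := by
      rw [KK]
    have hxw : (x w : RAAG Γ) ∈ Sgen (Γ := Γ) := ⟨w, rfl⟩
    rcases eq_or_ne (pv p w) 0 with hw | hw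
    · -- dead letter case
      obtain ⟨u, hu, hadj⟩ := (hstar' w).resolve_left (by simpa using hw)
      obtain ⟨W₁, m₁, hEq, hG₁, hm₁⟩ := trans p hc hv hu E hW (by omega)
      have hE₂ : (m₁ * Qv p u).natAbs ≤ Pn p * (E.natAbs + Pn p) + 1 := by
        have h1 : (m₁ * Qv p u).natAbs = m₁.natAbs * (Qv p u).natAbs := Int.natAbs_mul _ _
        have h2 : (Qv p u).natAbs ≤ Pn p := Qv_natAbs_le p hu
        have h4 : m₁.natAbs * (Qv p u).natAbs ≤ (E.natAbs + Pn p) * Pn p :=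
          Nat.mul_le_mul hm₁ h2
        nlinarith
      have hcomm : Commute ((x u : RAAG Γ) ^ (m₁ * Qv p u)) (x w ^ δ) :=
        ((commute_of_adj hadj).symm.zpow_zpow _ _)
      have hG₂ : Good p β (aj + Pn p + 1) (c + Fintype.card V * (E.natAbs + Pn p))
          (W₁ * x w ^ δ) :=
        hG₁.junk (p := p) ((hasWord_zpow hxw δ).mono hδ)
      have hmid : W₁ * x u ^ (m₁ * Qv p u) * x w ^ δ
          = W₁ * x w ^ δ * x u ^ (m₁ * Qv p u) := by
        rw [mul_assoc, hcomm.eq, ← mul_assoc]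
      have hstep : W * x v ^ E * (x w ^ δ :: l').prod
          = (W₁ * x w ^ δ) * x u ^ (m₁ * Qv p u) * l'.prod := by
        rw [List.prod_cons, ← mul_assoc, hEq, hmid]
      obtain ⟨W', u', m, hu', hEq', hG', hm'⟩ := ih (fun z hz => hl z (by simp [hz])) hu
        (m₁ * Qv p u) hG₂ (by omega)
      obtain ⟨harith1, harith2⟩ := ml_arith (KK p) (Fintype.card V) (Pn p) l'.length
        E.natAbs (m₁ * Qv p u).natAbs hKKarith hE₂
      refine ⟨W', u', m, hu', ?_, ?_, ?_⟩
      · rw [hstep]; exact hEq'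
      · exact hG'.mono (p := p) (by omega) (by omega)
      · omega
    · -- living letter case
      obtain ⟨W₁, m₁, hEq, hG₁, hm₁⟩ := trans p hc hv hw E hW (by omega)
      set E₂ : ℤ := m₁ * Qv p w + δ with hE₂def
      have hE₂ : E₂.natAbs ≤ Pn p * (E.natAbs + Pn p) + 1 := by
        have h1 : (m₁ * Qv p w).natAbs = m₁.natAbs * (Qv p w).natAbs := Int.natAbs_mul _ _
        have h2 : (Qv p w).natAbs ≤ Pn p := Qv_natAbs_le p hw
        have h3 : E₂.natAbs ≤ (m₁ * Qv p w).natAbs + δ.natAbs := Int.natAbs_add_le _ _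
        have h4 : m₁.natAbs * (Qv p w).natAbs ≤ (E.natAbs + Pn p) * Pn p :=
          Nat.mul_le_mul hm₁ h2
        nlinarith
      have hstep : W * x v ^ E * (x w ^ δ :: l').prod = W₁ * x w ^ E₂ * l'.prod := by
        rw [List.prod_cons, ← mul_assoc, hEq, hE₂def, zpow_add]
        group
      obtain ⟨W', u', m, hu', hEq', hG', hm'⟩ := ih (fun z hz => hl z (by simp [hz])) hw E₂
        hG₁ (by omega)
      obtain ⟨harith1, harith2⟩ := ml_arith (KK p) (Fintype.card V) (Pn p) l'.length
        E.natAbs E₂.natAbs hKKarith hE₂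
      refine ⟨W', u', m, hu', ?_, ?_, ?_⟩
      · rw [hstep]; exact hEq'
      · exact hG'.mono (p := p) (by omega) (by omega)
      · omega

/-! ### Staircase and the key factor lemma -/

/-- a choice of word length for each element -/
noncomputable def nWord (g : RAAG Γ) : ℕ := (expressible g).choose

theorem nWord_spec (g : RAAG Γ) : HasWord (Sgen (Γ := Γ)) g (nWord g) :=
  (expressible g).choose_spec

open Classical in
/-- residue representatives -/
noncomputable def sigma (ρ : ℤ) : RAAG Γ :=
  if ρ = 0 then 1 else (if h : ∃ g : RAAG Γ, htp p g = ρ then h.choose else 1)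

theorem sigma_zero : sigma p 0 = 1 := by simp [sigma]

theorem htp_sigma {ρ : ℤ} (hρ : ∃ g : RAAG Γ, htp p g = ρ) : htp p (sigma p ρ) = ρ := by
  rcases eq_or_ne ρ 0 with h | h
  · rw [h, sigma_zero, htp_one]
  · rw [sigma, if_neg h, dif_pos hρ]
    exact hρ.choose_spec

/-- uniform bound on residue words -/
noncomputable def Lam : ℕ :=
  (Finset.Icc (-(mp p : ℤ)) (mp p : ℤ)).sup fun ρ => nWord (sigma p ρ)

theorem sigma_hasWord {ρ : ℤ} (hρ : ρ.natAbs ≤ mp p) :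
    HasWord (Sgen (Γ := Γ)) (sigma p ρ) (Lam p) := by
  refine (nWord_spec _).mono ?_
  refine Finset.le_sup (f := fun ρ => nWord (sigma p ρ)) ?_
  rw [Finset.mem_Icc]
  omega

/-- the staircase -/
noncomputable def tau (v₀ : V) (c : ℤ) : RAAG Γ :=
  x v₀ ^ (c / pv p v₀) * sigma p (c % pv p v₀)

theorem tau_zero (v₀ : V) : tau p v₀ 0 = 1 := by
  simp [tau, sigma_zero]

theorem htp_tau {v₀ : V} (hv₀ : pv p v₀ ≠ 0) {c : ℤ} (hcex : ∃ g : RAAG Γ, htp p g = c) :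
    htp p (tau p v₀ c) = c := by
  obtain ⟨g, hg⟩ := hcex
  have hpv : htp p (x v₀) = pv p v₀ := rfl
  have hres : ∃ g' : RAAG Γ, htp p g' = c % pv p v₀ := by
    refine ⟨g * (x v₀ ^ (c / pv p v₀))⁻¹, ?_⟩
    rw [htp_mul, htp_inv, htp_zpow, hg, hpv]
    have := Int.emod_add_mul_ediv c (pv p v₀)
    linarith [this]
  rw [tau, htp_mul, htp_zpow, htp_sigma p hres, hpv]
  have := Int.emod_add_mul_ediv c (pv p v₀)
  linarith [this]

theorem res_natAbs_le {v₀ : V} (hv₀ : pv p v₀ ≠ 0) (c : ℤ) :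
    (c % pv p v₀).natAbs ≤ mp p := by
  have h1 : 0 ≤ c % pv p v₀ := Int.emod_nonneg c hv₀
  have h2 : c % pv p v₀ = c % |pv p v₀| := by
    rcases le_or_gt 0 (pv p v₀) with h | h
    · rw [abs_of_nonneg h]
    · rw [abs_of_neg h, Int.emod_neg]
  have h3 : c % |pv p v₀| < |pv p v₀| := Int.emod_lt_of_pos c (abs_pos.2 hv₀)
  have h4 : |pv p v₀| = ((pv p v₀).natAbs : ℤ) := by rw [Int.abs_eq_natAbs]
  have h5 := pv_le_mp p v₀
  omega

theorem ediv_natAbs_le {v₀ : V} (hv₀ : pv p v₀ ≠ 0) (c : ℤ) :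
    (c / pv p v₀).natAbs ≤ c.natAbs + mp p := by
  have hsum := Int.emod_add_mul_ediv c (pv p v₀)
  have h1 : (pv p v₀ * (c / pv p v₀)).natAbs = (pv p v₀).natAbs * (c / pv p v₀).natAbs :=
    Int.natAbs_mul _ _
  have h2 : pv p v₀ * (c / pv p v₀) = c - c % pv p v₀ := by linarith [hsum]
  have h3 : (c - c % pv p v₀).natAbs ≤ c.natAbs + (c % pv p v₀).natAbs := Int.natAbs_sub_le _ _
  have h4 := res_natAbs_le p hv₀ c
  have h5 : 1 ≤ (pv p v₀).natAbs := Int.natAbs_pos.2 hv₀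
  have h6 : (c / pv p v₀).natAbs ≤ (pv p v₀).natAbs * (c / pv p v₀).natAbs :=
    Nat.le_mul_of_pos_left _ (by omega)
  omega

/-- convert `Sgen`-letters to vertex powers -/
theorem letters_of_hasWord {g : RAAG Γ} {n : ℕ} (h : HasWord (Sgen (Γ := Γ)) g n) :
    ∃ l : List (RAAG Γ), l.length ≤ n ∧
      (∀ y ∈ l, ∃ (w : V) (δ : ℤ), δ.natAbs ≤ 1 ∧ y = x w ^ δ) ∧ l.prod = g := by
  obtain ⟨l, h1, h2, h3⟩ := h
  refine ⟨l, h1, ?_, h3⟩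
  intro y hy
  rcases h2 y hy with ⟨w, hw⟩ | ⟨w, hw⟩
  · exact ⟨w, 1, by simp, by rw [← hw]; simp⟩
  · refine ⟨w, -1, by simp, ?_⟩
    rw [zpow_neg_one, hw, inv_inv]

/-- global constants -/
noncomputable def k0 : ℕ := 2 * Lam p + 1
noncomputable def A0 : ℕ := (Pn p + 1) * (k0 p + 2) + Pn p
noncomputable def D0 : ℕ := mp p * A0 p + mp p
noncomputable def beta0 : ℕ := 2 * (A0 p + D0 p) + 2 * Pn p + 2
noncomputable def CC : ℕ :=
  KK p ^ (k0 p + 1) * (mp p + 1) * (Fintype.card V * Pn p + 1) + Fintype.card V * Pn p + 1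

theorem key (hc : (Γ.induce (Lset p)).Connected)
    (hstar' : ∀ v : V, pv p v ≠ 0 ∨ ∃ u : V, pv p u ≠ 0 ∧ Γ.Adj v u)
    {v₀ : V} (hv₀ : pv p v₀ ≠ 0) (s : RAAG Γ)
    (hs : ∃ (w : V) (δ : ℤ), δ.natAbs ≤ 1 ∧ s = x w ^ δ)
    (c : ℤ) (hcex : ∃ g : RAAG Γ, htp p g = c) :
    HasWord (T0 p (beta0 p)) (tau p v₀ c * s * (tau p v₀ (c + htp p s))⁻¹)
      (CC p * (c.natAbs + 1) + 1) := by
  classical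
  set c' := c + htp p s with hc'def
  -- word lists for the residues
  obtain ⟨lρ, hlρ1, hlρ2, hlρ3⟩ := letters_of_hasWord
    (sigma_hasWord p (res_natAbs_le p hv₀ c))
  obtain ⟨lρ', hlρ'1, hlρ'2, hlρ'3⟩ := letters_of_hasWord
    ((sigma_hasWord p (res_natAbs_le p hv₀ c')).inv)
  set l : List (RAAG Γ) := lρ ++ s :: lρ' with hldef
  have hllen : l.length ≤ k0 p := by
    rw [hldef, k0]
    simp only [List.length_append, List.length_cons]
    omega
  have hlet : ∀ y ∈ l, ∃ (w : V) (δ : ℤ), δ.natAbs ≤ 1 ∧ y = x w ^ δ := by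
    intro y hy
    rw [hldef] at hy
    rcases List.mem_append.1 hy with h | h
    · exact hlρ2 y h
    · rcases List.mem_cons.1 h with h | h
      · exact h ▸ hs
      · exact hlρ'2 y h
  have hlprod : l.prod = sigma p (c % pv p v₀) * (s * (sigma p (c' % pv p v₀))⁻¹) := by
    rw [hldef, List.prod_append, List.prod_cons, hlρ3, hlρ'3]
  set m : ℤ := c / pv p v₀ with hmdef
  set m' : ℤ := c' / pv p v₀ with hm'def
  have hfactor : tau p v₀ c * s * (tau p v₀ c')⁻¹
      = x v₀ ^ m * l.prod * (x v₀ ^ m')⁻¹ := by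
    rw [tau, tau, hlprod]
    group
    rfl
  -- run the machine
  have hKKpos : 0 < KK p := by rw [KK]; have := one_le_Pn p; nlinarith
  have hβ1 : 2 * (0 + (Pn p + 1) * (l.length + 1)) + 2 * Pn p ≤ beta0 p := by
    have h1 : (Pn p + 1) * (l.length + 1) ≤ (Pn p + 1) * (k0 p + 2) :=
      Nat.mul_le_mul_left _ (by omega)
    rw [beta0, A0]
    omega
  obtain ⟨W', u, m₂, hu, hEq1, hG1, hm₂⟩ := ml p hc hstar' l hlet hv₀ m
    (good_one p (beta0 p)) hβ1
  have hβ2 : 2 * ((0 + (Pn p + 1) * (l.length + 1)) + Pn p) + 2 * Pn p ≤ beta0 p := by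
    have h1 : (Pn p + 1) * (l.length + 1) ≤ (Pn p + 1) * (k0 p + 2) :=
      Nat.mul_le_mul_left _ (by omega)
    rw [beta0, A0]
    omega
  obtain ⟨W'', m₃, hEq2, hG2, hm₃⟩ := trans p hc hu hv₀ (m₂ * Qv p u) hG1 hβ2
  set D : ℤ := m₃ * Qv p v₀ - m' with hDdef
  have hfacEq : tau p v₀ c * s * (tau p v₀ c')⁻¹ = W'' * x v₀ ^ D := by
    rw [hfactor, show (x v₀ : RAAG Γ) ^ m * l.prod = 1 * x v₀ ^ m * l.prod by group, hEq1,
      hEq2, hDdef, mul_assoc, ← zpow_neg, ← zpow_add]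
    congr 2
    try ring
  have hker : tau p v₀ c * s * (tau p v₀ c')⁻¹ ∈ p.ker := by
    rw [mem_ker_iff, htp_mul, htp_mul, htp_inv, htp_tau p hv₀ hcex,
      htp_tau p hv₀ ⟨hcex.choose * s, by rw [htp_mul, hcex.choose_spec]⟩]
    ring
  -- bound on D
  have hDb : D.natAbs ≤ D0 p := by
    have h0 : htp p (W'' * x v₀ ^ D) = 0 := by
      rw [← hfacEq]
      exact (mem_ker_iff p _).1 hker
    rw [htp_mul, htp_zpow] at h0
    have hpv : htp p (x v₀) = pv p v₀ := rfl
    rw [hpv] at h0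
    have h1 : (htp p W'').natAbs ≤ mp p * ((0 + (Pn p + 1) * (l.length + 1)) + Pn p) :=
      hG2.htp_natAbs (p := p)
    have h2 : (D * pv p v₀).natAbs = D.natAbs * (pv p v₀).natAbs := Int.natAbs_mul _ _
    have h3 : D * pv p v₀ = - htp p W'' := by linarith [h0]
    have h4 : (D * pv p v₀).natAbs = (htp p W'').natAbs := by rw [h3]; simp
    have h5 : 1 ≤ (pv p v₀).natAbs := Int.natAbs_pos.2 hv₀
    have h6 : D.natAbs ≤ D.natAbs * (pv p v₀).natAbs := Nat.le_mul_of_pos_right _ (by omega)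
    have h7 : (Pn p + 1) * (l.length + 1) ≤ (Pn p + 1) * (k0 p + 2) :=
      Nat.mul_le_mul_left _ (by omega)
    have h8 : mp p * ((0 + (Pn p + 1) * (l.length + 1)) + Pn p) ≤ mp p * A0 p := by
      refine Nat.mul_le_mul_left _ ?_
      rw [A0]
      omega
    rw [D0]
    omega
  have hxv₀ : (x v₀ : RAAG Γ) ∈ Sgen (Γ := Γ) := ⟨v₀, rfl⟩
  have hGfin : Good p (beta0 p)
      ((0 + (Pn p + 1) * (l.length + 1)) + Pn p + D0 p)
      ((0 + KK p ^ (l.length + 1) * (m.natAbs + 1)) +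
        Fintype.card V * ((m₂ * Qv p u).natAbs + Pn p))
      (W'' * x v₀ ^ D) :=
    hG2.junk (p := p) ((hasWord_zpow hxv₀ D).mono hDb)
  have hpeel := hGfin.peel (p := p) (by rw [← hfacEq]; exact hker) (by
    have h7 : (Pn p + 1) * (l.length + 1) ≤ (Pn p + 1) * (k0 p + 2) :=
      Nat.mul_le_mul_left _ (by omega)
    rw [beta0, A0]
    omega)
  rw [← hfacEq] at hpeel
  refine hpeel.mono ?_
  -- cost arithmetic
  have hmle : m.natAbs ≤ c.natAbs + mp p := ediv_natAbs_le p hv₀ c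
  have hple : KK p ^ (l.length + 1) ≤ KK p ^ (k0 p + 1) :=
    Nat.pow_le_pow_right (by omega) (by omega)
  have e1 : m.natAbs + 1 ≤ (mp p + 1) * (c.natAbs + 1) := by
    have hx : (mp p + 1) * (c.natAbs + 1) = mp p * c.natAbs + mp p + c.natAbs + 1 := by ring
    omega
  have e2 : KK p ^ (l.length + 1) * (m.natAbs + 1) ≤
      KK p ^ (k0 p + 1) * ((mp p + 1) * (c.natAbs + 1)) := Nat.mul_le_mul hple e1
  have e3 : (m₂ * Qv p u).natAbs ≤ KK p ^ (l.length + 1) * (m.natAbs + 1) * Pn p := by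
    have h1 : (m₂ * Qv p u).natAbs = m₂.natAbs * (Qv p u).natAbs := Int.natAbs_mul _ _
    have h2 : (Qv p u).natAbs ≤ Pn p := Qv_natAbs_le p hu
    have h3 : m₂.natAbs * (Qv p u).natAbs ≤ (KK p ^ (l.length + 1) * (m.natAbs + 1)) * Pn p :=
      Nat.mul_le_mul hm₂ h2
    omega
  have e4 : Fintype.card V * ((m₂ * Qv p u).natAbs + Pn p) ≤
      Fintype.card V * Pn p * (KK p ^ (k0 p + 1) * ((mp p + 1) * (c.natAbs + 1))) +
        Fintype.card V * Pn p := by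
    have h1 : (m₂ * Qv p u).natAbs ≤ KK p ^ (k0 p + 1) * ((mp p + 1) * (c.natAbs + 1)) * Pn p :=
      le_trans e3 (Nat.mul_le_mul_right _ e2)
    calc Fintype.card V * ((m₂ * Qv p u).natAbs + Pn p)
        ≤ Fintype.card V * (KK p ^ (k0 p + 1) * ((mp p + 1) * (c.natAbs + 1)) * Pn p + Pn p) :=
          Nat.mul_le_mul_left _ (by omega)
      _ = Fintype.card V * Pn p * (KK p ^ (k0 p + 1) * ((mp p + 1) * (c.natAbs + 1))) +
          Fintype.card V * Pn p := by ring
  have e5 : Fintype.card V * Pn p ≤ Fintype.card V * Pn p * (c.natAbs + 1) := by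
    have := Nat.le_mul_of_pos_right (Fintype.card V * Pn p) (show 0 < c.natAbs + 1 by omega)
    omega
  have e6 : CC p * (c.natAbs + 1) =
      KK p ^ (k0 p + 1) * ((mp p + 1) * (c.natAbs + 1)) +
      Fintype.card V * Pn p * (KK p ^ (k0 p + 1) * ((mp p + 1) * (c.natAbs + 1))) +
      Fintype.card V * Pn p * (c.natAbs + 1) + (c.natAbs + 1) := by
    rw [CC]; ring
  omega

/-! ### Telescoping -/

theorem htp_letter_pow {s : RAAG Γ} (hs : ∃ (w : V) (δ : ℤ), δ.natAbs ≤ 1 ∧ s = x w ^ δ) :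
    (htp p s).natAbs ≤ mp p := by
  obtain ⟨w, δ, hδ, rfl⟩ := hs
  rw [htp_zpow]
  have h1 : (δ * htp p (x w)).natAbs = δ.natAbs * (htp p (x w)).natAbs := Int.natAbs_mul _ _
  have h2 := pv_le_mp p w
  have h3 : (htp p (x w)).natAbs = (pv p w).natAbs := rfl
  have h4 : δ.natAbs * (htp p (x w)).natAbs ≤ 1 * (htp p (x w)).natAbs :=
    Nat.mul_le_mul_right _ hδ
  omega

theorem tele (hc : (Γ.induce (Lset p)).Connected)
    (hstar' : ∀ v : V, pv p v ≠ 0 ∨ ∃ u : V, pv p u ≠ 0 ∧ Γ.Adj v u)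
    {v₀ : V} (hv₀ : pv p v₀ ≠ 0) (l : List (RAAG Γ)) :
    (∀ y ∈ l, ∃ (w : V) (δ : ℤ), δ.natAbs ≤ 1 ∧ y = x w ^ δ) →
    ∀ (g0 : RAAG Γ) (k : ℕ), HasWord (T0 p (beta0 p)) (g0 * (tau p v₀ (htp p g0))⁻¹) k →
    HasWord (T0 p (beta0 p)) ((g0 * l.prod) * (tau p v₀ (htp p (g0 * l.prod)))⁻¹)
      (k + l.length * (CC p * ((htp p g0).natAbs + mp p * l.length + 1) + 1)) := by
  induction l with
  | nil =>
    intro _ g0 k hk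
    simpa using hk
  | cons s l' ih =>
    intro hl g0 k hk
    have hs := hl s (by simp)
    have hkey := key p hc hstar' hv₀ s hs (htp p g0) ⟨g0, rfl⟩
    have hB1 : HasWord (T0 p (beta0 p)) ((g0 * s) * (tau p v₀ (htp p (g0 * s)))⁻¹)
        (k + (CC p * ((htp p g0).natAbs + 1) + 1)) := by
      have hEq : (g0 * s) * (tau p v₀ (htp p (g0 * s)))⁻¹ =
          (g0 * (tau p v₀ (htp p g0))⁻¹) *
            (tau p v₀ (htp p g0) * s * (tau p v₀ (htp p g0 + htp p s))⁻¹) := by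
        rw [htp_mul]
        group
      rw [hEq]
      exact hk.mul hkey
    have hres := ih (fun y hy => hl y (by simp [hy])) (g0 * s)
      (k + (CC p * ((htp p g0).natAbs + 1) + 1)) hB1
    rw [show (g0 * s) * l'.prod = g0 * (s :: l').prod by rw [List.prod_cons]; group] at hres
    refine hres.mono ?_
    -- arithmetic
    have hc1 : (htp p (g0 * s)).natAbs ≤ (htp p g0).natAbs + mp p := by
      rw [htp_mul]
      have h1 := htp_letter_pow p hs
      have h2 := Int.natAbs_add_le (htp p g0) (htp p s)
      omega
    have hlen : (s :: l').length = l'.length + 1 := rfl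
    set Y : ℕ := CC p * ((htp p g0).natAbs + mp p * (s :: l').length + 1) + 1 with hYdef
    have hmpexp : mp p * (s :: l').length = mp p * l'.length + mp p := by rw [hlen]; ring
    have hS : CC p * ((htp p g0).natAbs + 1) + 1 ≤ Y := by
      rw [hYdef]
      have := Nat.mul_le_mul_left (CC p)
        (show (htp p g0).natAbs + 1 ≤ (htp p g0).natAbs + mp p * (s :: l').length + 1 by omega)
      omega
    have hX : CC p * ((htp p (g0 * s)).natAbs + mp p * l'.length + 1) + 1 ≤ Y := by
      rw [hYdef]
      have := Nat.mul_le_mul_left (CC p)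
        (show (htp p (g0 * s)).natAbs + mp p * l'.length + 1 ≤
          (htp p g0).natAbs + mp p * (s :: l').length + 1 by omega)
      omega
    have hXX : l'.length * (CC p * ((htp p (g0 * s)).natAbs + mp p * l'.length + 1) + 1) ≤
        l'.length * Y := Nat.mul_le_mul_left _ hX
    have hYY : (s :: l').length * Y = l'.length * Y + Y := by rw [hlen]; ring
    omega

/-- the quadratic bound for kernel elements -/
theorem main_bound (hc : (Γ.induce (Lset p)).Connected)
    (hstar' : ∀ v : V, pv p v ≠ 0 ∨ ∃ u : V, pv p u ≠ 0 ∧ Γ.Adj v u)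
    {v₀ : V} (hv₀ : pv p v₀ ≠ 0) {h : RAAG Γ} (hker : h ∈ p.ker) {n : ℕ}
    (hw : HasWord (Sgen (Γ := Γ)) h n) :
    HasWord (T0 p (beta0 p)) h (n * (CC p * (mp p * n + 1) + 1)) := by
  obtain ⟨l, hlen, hlet, hprod⟩ := letters_of_hasWord hw
  have hstart : HasWord (T0 p (beta0 p)) ((1 : RAAG Γ) * (tau p v₀ (htp p (1 : RAAG Γ)))⁻¹) 0 := by
    rw [htp_one, tau_zero]
    simpa using hasWord_one _
  have hres := tele p hc hstar' hv₀ l hlet 1 0 hstart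
  rw [one_mul, hprod] at hres
  rw [show htp p h = 0 from (mem_ker_iff p h).1 hker, tau_zero, inv_one, mul_one] at hres
  refine hres.mono ?_
  have h0 : (htp p (1 : RAAG Γ)).natAbs = 0 := by rw [htp_one]; rfl
  rw [h0]
  have hin : CC p * (0 + mp p * l.length + 1) + 1 ≤ CC p * (mp p * n + 1) + 1 := by
    have := Nat.mul_le_mul_left (CC p)
      (show 0 + mp p * l.length + 1 ≤ mp p * n + 1 by
        have := Nat.mul_le_mul_left (mp p) hlen
        omega)
    omega
  calc 0 + l.length * (CC p * (0 + mp p * l.length + 1) + 1)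
      ≤ n * (CC p * (mp p * n + 1) + 1) := by
        have := Nat.mul_le_mul hlen hin
        omega

/-- `T0` generates the kernel -/
theorem closure_T0 (hc : (Γ.induce (Lset p)).Connected)
    (hstar' : ∀ v : V, pv p v ≠ 0 ∨ ∃ u : V, pv p u ≠ 0 ∧ Γ.Adj v u)
    {v₀ : V} (hv₀ : pv p v₀ ≠ 0) :
    Subgroup.closure (T0 p (beta0 p)) = p.ker := by
  refine le_antisymm ((Subgroup.closure_le _).2 (T0_subset_ker p _)) ?_
  intro h hker
  obtain ⟨n, hw⟩ := expressible h
  exact mem_closure_of_hasWord (main_bound p hc hstar' hv₀ hker hw)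

end RaagSetup

theorem exists_uniform_bound {G : Type*} [Group G] {T s : Set G} (hs : s.Finite)
    (h : ∀ t ∈ s, ∃ n, HasWord T t n) : ∃ M, ∀ t ∈ s, HasWord T t M := by
  classical
  choose f hf using h
  refine ⟨hs.toFinset.sup (fun t => if ht : t ∈ s then f t ht else 0), ?_⟩
  intro t ht
  refine (hf t ht).mono ?_
  have h1 : (fun t => if ht : t ∈ s then f t ht else 0) t = f t ht := dif_pos ht
  rw [← h1]
  exact Finset.le_sup (f := fun t => if ht : t ∈ s then f t ht else 0) (hs.mem_toFinset.2 ht)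

end Stmt3Aux

open Stmt3Aux in
theorem stmt3 {V : Type*} [Fintype V] (Γ : SimpleGraph V)
    (hconn : Γ.Connected) (hcard : 2 ≤ Fintype.card V)
    (p : RAAG Γ →* Multiplicative ℤ)
    (hconn' : (Γ.induce {v : V | p (raagGen Γ v) ≠ 1}).Connected)
    (hstar : ∀ v : V, p (raagGen Γ v) ≠ 1 ∨
      ∃ u : V, p (raagGen Γ u) ≠ 1 ∧ Γ.Adj v u) :
    Subgroup.FG p.ker ∧
    ∀ T : Set (RAAG Γ), T.Finite → T ⊆ (p.ker : Set (RAAG Γ)) →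
      Subgroup.closure T = p.ker →
      Dominated (distortion (Set.range (raagGen Γ)) T p.ker) (fun n => n ^ 2) := by
  classical
  have hconn2 : (Γ.induce (Lset p)).Connected := by
    rw [← Lset_eq p]
    exact hconn'
  obtain ⟨⟨v₀, hv₀⟩⟩ := hconn2.nonempty
  have hv₀' : pv p v₀ ≠ 0 := hv₀
  have hstar2 : ∀ v : V, pv p v ≠ 0 ∨ ∃ u : V, pv p u ≠ 0 ∧ Γ.Adj v u := by
    intro v
    rcases hstar v with h | ⟨u, hu, hadj⟩
    · left
      intro h0
      exact h (MonoidHom.mem_ker.1 ((mem_ker_iff p _).2 h0))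
    · right
      exact ⟨u, fun h0 => hu (MonoidHom.mem_ker.1 ((mem_ker_iff p _).2 h0)), hadj⟩
  have hclosure := closure_T0 p hconn2 hstar2 hv₀'
  refine ⟨(Subgroup.fg_iff _).2 ⟨T0 p (beta0 p), hclosure, T0_finite p _⟩, ?_⟩
  intro T hTfin hTsub hTclos
  have hTw : ∀ t ∈ T0 p (beta0 p), ∃ n, HasWord T t n := by
    intro t ht
    refine hasWord_of_mem_closure ?_
    rw [hTclos]
    exact ht.1
  obtain ⟨M, hM⟩ := exists_uniform_bound (T0_finite p _) hTw
  refine ⟨M * CC p * mp p + M * CC p + M + 1, 1, M * CC p + M + 1, 0,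
    by omega, by omega, by omega, ?_⟩
  intro r hr
  refine csSup_le' ?_
  rintro n ⟨h, hker, hwl, rfl⟩
  have hword : HasWord (Sgen (Γ := Γ)) h r :=
    (hasWord_wordLength (expressible h)).mono hwl
  have hT0 : HasWord (T0 p (beta0 p)) h (r * (CC p * (mp p * r + 1) + 1)) :=
    main_bound p hconn2 hstar2 hv₀' hker hword
  have hT : HasWord T h (M * (r * (CC p * (mp p * r + 1) + 1))) :=
    hasWord_trans hT0 (fun s hs => hM s hs)
  have hn : wordLength T h ≤ M * (r * (CC p * (mp p * r + 1) + 1)) :=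
    wordLength_le_of_hasWord hT
  have harith : M * (r * (CC p * (mp p * r + 1) + 1)) ≤
      (M * CC p * mp p + M * CC p + M + 1) * (1 * r) ^ 2 + (M * CC p + M + 1) * r := by
    have h1 : M * (r * (CC p * (mp p * r + 1) + 1)) =
        M * CC p * mp p * r ^ 2 + M * CC p * r + M * r := by ring
    have h2 : (M * CC p * mp p + M * CC p + M + 1) * (1 * r) ^ 2 + (M * CC p + M + 1) * r =
        M * CC p * mp p * r ^ 2 + (M * CC p + M + 1) * r ^ 2 +
          M * CC p * r + M * r + r := by ring
    have h3 : 0 ≤ (M * CC p + M + 1) * r ^ 2 := Nat.zero_le _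
    omega
  exact le_trans hn harith
end

section
/- Let Γ be a connected finite simplicial graph with at least two vertices that is a join, let p : A_Γ → ℤ be a group homomorphism mapping every vertex of Γ to a nonzero integer, and let N = ker p. Then N is finitely generated and the distortion of N in A_Γ is linear, i.e. Dist_{A_Γ}^N ∼ n. -/
/-- `f ∼ g`. -/
def FEquiv (f g : ℕ → ℕ) : Prop := Dominated f g ∧ Dominated g f

/-- A graph is a join if its vertex set splits into two nonempty parts with every
vertex of one part adjacent to every vertex of the other. -/
def IsJoin {α : Type*} (Γ : SimpleGraph α) : Prop :=
  ∃ V₁ V₂ : Set α, V₁.Nonempty ∧ V₂.Nonempty ∧ Disjoint V₁ V₂ ∧ V₁ ∪ V₂ = Set.univ ∧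
    ∀ u ∈ V₁, ∀ v ∈ V₂, Γ.Adj u v

namespace StmtAux

variable {G : Type*} [Group G]

def HasWord (S : Set G) (g : G) : Prop :=
  ∃ l : List G, (∀ x ∈ l, x ∈ S ∨ x⁻¹ ∈ S) ∧ l.prod = g

lemma hasWord_of_mem_closure {S : Set G} {g : G} (h : g ∈ Subgroup.closure S) :
    HasWord S g := by
  have h' : g ∈ Submonoid.closure (S ∪ S⁻¹) := by
    rw [← Subgroup.closure_toSubmonoid]; exact h
  obtain ⟨l, hl, hp⟩ := Submonoid.exists_list_of_mem_closure h'
  exact ⟨l, fun x hx => by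
    rcases hl x hx with h | h
    · exact Or.inl h
    · exact Or.inr (Set.mem_inv.mp h), hp⟩

lemma wordLength_le {S : Set G} {g : G} {l : List G}
    (hl : ∀ x ∈ l, x ∈ S ∨ x⁻¹ ∈ S) (hp : l.prod = g) :
    wordLength S g ≤ l.length :=
  Nat.sInf_le ⟨l, rfl, hl, hp⟩

lemma exists_word {S : Set G} {g : G} (h : HasWord S g) :
    ∃ l : List G, l.length = wordLength S g ∧ (∀ x ∈ l, x ∈ S ∨ x⁻¹ ∈ S) ∧ l.prod = g := by
  obtain ⟨l, hl, hp⟩ := h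
  have hne : {n | ∃ l : List G, l.length = n ∧ (∀ x ∈ l, x ∈ S ∨ x⁻¹ ∈ S) ∧ l.prod = g}.Nonempty :=
    ⟨l.length, l, rfl, hl, hp⟩
  obtain ⟨l', hl', hw, hp'⟩ := Nat.sInf_mem hne
  exact ⟨l', hl', hw, hp'⟩

/-- substitute a word for each letter -/
lemma concat_word {T : Set G} {C : ℕ} :
    ∀ l : List G, (∀ x ∈ l, ∃ lx : List G, lx.length ≤ C ∧
        (∀ y ∈ lx, y ∈ T ∨ y⁻¹ ∈ T) ∧ lx.prod = x) →
      ∃ L : List G, L.length ≤ C * l.length ∧ (∀ y ∈ L, y ∈ T ∨ y⁻¹ ∈ T) ∧ L.prod = l.prod := by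
  intro l
  induction l with
  | nil => exact fun _ => ⟨[], by simp, by simp, by simp⟩
  | cons x rest ih =>
    intro hl
    obtain ⟨lx, hlen, hlet, hprod⟩ := hl x (by simp)
    obtain ⟨L, hL, hLlet, hLprod⟩ := ih (fun y hy => hl y (by simp [hy]))
    refine ⟨lx ++ L, ?_, ?_, ?_⟩
    · simp only [List.length_append, List.length_cons]
      calc lx.length + L.length ≤ C + C * rest.length := by omega
        _ = C * (rest.length + 1) := by ring
    · intro y hy; rcases List.mem_append.mp hy with h | h
      · exact hlet y h
      · exact hLlet y h
    · simp [List.prod_append, hprod, hLprod]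

lemma partition_word {P₁ P₂ : G → Prop} (hcomm : ∀ x y, P₁ x → P₂ y → Commute x y) :
    ∀ l : List G, (∀ x ∈ l, P₁ x ∨ P₂ x) →
      ∃ l₁ l₂ : List G, (∀ x ∈ l₁, P₁ x) ∧ (∀ x ∈ l₂, P₂ x) ∧
        l₁.length + l₂.length = l.length ∧ l₁.prod * l₂.prod = l.prod := by
  intro l
  induction l with
  | nil => exact fun _ => ⟨[], [], by simp, by simp, by simp, by simp⟩
  | cons x rest ih =>
    intro hl
    obtain ⟨l₁, l₂, h₁, h₂, hlen, hprod⟩ := ih (fun y hy => hl y (by simp [hy]))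
    rcases hl x (by simp) with hx | hx
    · exact ⟨x :: l₁, l₂, by simpa using ⟨hx, h₁⟩, h₂, by simp [← hlen]; omega,
        by simp only [List.prod_cons, mul_assoc, hprod]⟩
    · refine ⟨l₁, x :: l₂, h₁, by simpa using ⟨hx, h₂⟩, by simp [← hlen]; omega, ?_⟩
      have hc : Commute x l₁.prod :=
        Commute.list_prod_right l₁ x (fun y hy => (hcomm y x (h₁ y hy) hx).symm)
      calc l₁.prod * (x :: l₂).prod = l₁.prod * x * l₂.prod := by
            simp [List.prod_cons, mul_assoc]
        _ = x * l₁.prod * l₂.prod := by rw [← hc.eq]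
        _ = (x :: rest).prod := by simp [List.prod_cons, mul_assoc, hprod]


variable {G : Type*} [Group G]

/-- Additive value of a hom to `Multiplicative ℤ`. -/
def pval (p : G →* Multiplicative ℤ) (g : G) : ℤ := Multiplicative.toAdd (p g)

lemma pval_mul (p : G →* Multiplicative ℤ) (g h : G) :
    pval p (g * h) = pval p g + pval p h := by simp [pval]

lemma pval_one (p : G →* Multiplicative ℤ) : pval p 1 = 0 := by simp [pval]

lemma pval_inv (p : G →* Multiplicative ℤ) (g : G) : pval p g⁻¹ = - pval p g := by simp [pval]

lemma pval_zpow (p : G →* Multiplicative ℤ) (g : G) (c : ℤ) :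
    pval p (g ^ c) = c * pval p g := by simp [pval, toAdd_zpow]

lemma core (p : G →* Multiplicative ℤ) (lam : ℤ → G)
    (hlam : ∀ q : ℤ, q ∈ Set.range (pval p) → pval p (lam q) = q)
    (M : ℤ) (t : G) (ht0 : pval p t ≠ 0) (htM : |pval p t| ≤ M)
    (letters : Set G) (hcomm : ∀ x ∈ letters, Commute x t)
    (hMl : ∀ x ∈ letters, |pval p x| ≤ M)
    (T₀ : Set G)
    (hmem : ∀ (q c : ℤ) (x : G), x ∈ letters → |q| ≤ M → |c| ≤ 2*M →
      |q + pval p x + c * pval p t| ≤ M →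
      q ∈ Set.range (pval p) →
      lam q * (x * t ^ c) * (lam (q + pval p x + c * pval p t))⁻¹ ∈ T₀) :
    ∀ xs : List G, (∀ x ∈ xs, x ∈ letters) → ∀ q : ℤ, |q| ≤ M →
      q ∈ Set.range (pval p) →
      ∃ (ts : List G) (e q' : ℤ),
        (∀ u ∈ ts, u ∈ T₀) ∧ ts.length = xs.length ∧
        |e| ≤ 2 * M * xs.length ∧ |q'| ≤ M ∧
        q' = q + pval p xs.prod + e * pval p t ∧
        ts.prod = lam q * xs.prod * t ^ e * (lam q')⁻¹ := by
  intro xs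
  induction xs with
  | nil =>
    intro _ q hq hqr
    exact ⟨[], 0, q, by simp, by simp, by simp, hq, by simp [pval_one], by simp⟩
  | cons x rest ih =>
    intro hxs q hq hqr
    set τ := pval p t with hτ
    have hM1 : (1:ℤ) ≤ M := le_trans (Int.one_le_abs ht0) htM
    set q₁ := q + pval p x with hq₁
    set c := -(q₁ / τ) with hc
    set q₂ := q₁ % τ with hq₂
    have hq₂eq : q₂ = q + pval p x + c * τ := by
      rw [hq₂, hc, Int.emod_def]; ring
    have hq₂0 : 0 ≤ q₂ := Int.emod_nonneg _ ht0
    have hq₂M : |q₂| ≤ M := by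
      rw [abs_of_nonneg hq₂0]
      exact le_trans (le_of_lt (Int.emod_lt _ ht0)) (by rw [Int.natCast_natAbs]; exact htM)
    have hcM : |c| ≤ 2 * M := by
      have h1 : |c| ≤ |q₁| := by rw [hc, abs_neg]; exact Int.abs_ediv_le_abs _ _
      have h2 : |q₁| ≤ |q| + |pval p x| := abs_add_le _ _
      have h3 : |pval p x| ≤ M := hMl x (hxs x (by simp))
      linarith
    have hq₂r : q₂ ∈ Set.range (pval p) := by
      obtain ⟨g₀, hg₀⟩ := hqr
      exact ⟨g₀ * x * t ^ c, by rw [pval_mul, pval_mul, pval_zpow, hg₀, hq₂eq]⟩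
    have hu : lam q * (x * t ^ c) * (lam q₂)⁻¹ ∈ T₀ := by
      have := hmem q c x (hxs x (by simp)) hq hcM (by rw [← hq₂eq]; exact hq₂M) hqr
      rwa [← hq₂eq] at this
    obtain ⟨ts', e', q', hts'mem, hts'len, he', hq', hq'eq, hts'prod⟩ :=
      ih (fun y hy => hxs y (by simp [hy])) q₂ hq₂M hq₂r
    refine ⟨(lam q * (x * t ^ c) * (lam q₂)⁻¹) :: ts', c + e', q', ?_, ?_, ?_, hq', ?_, ?_⟩
    · intro u hu'
      rcases List.mem_cons.mp hu' with h | h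
      · rw [h]; exact hu
      · exact hts'mem u h
    · simp [hts'len]
    · have : |c + e'| ≤ |c| + |e'| := abs_add_le _ _
      have hlen : (rest.length : ℤ) ≥ 0 := by positivity
      simp only [List.length_cons]
      push_cast
      have := he'
      linarith
    · rw [hq'eq, hq₂eq, List.prod_cons, pval_mul]; ring
    · rw [List.prod_cons, hts'prod]
      have hcomm' : Commute (t ^ c) rest.prod :=
        (Commute.list_prod_right rest t
          (fun y hy => (hcomm y (hxs y (by simp [hy]))).symm)).zpow_left c
      calc lam q * (x * t ^ c) * (lam q₂)⁻¹ * (lam q₂ * rest.prod * t ^ e' * (lam q')⁻¹)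
          = lam q * (x * (t ^ c * rest.prod)) * t ^ e' * (lam q')⁻¹ := by group
        _ = lam q * (x * (rest.prod * t ^ c)) * t ^ e' * (lam q')⁻¹ := by rw [hcomm'.eq]
        _ = lam q * (x :: rest).prod * t ^ (c + e') * (lam q')⁻¹ := by
            rw [List.prod_cons, zpow_add]; group


lemma pval_prod_zero (p : G →* Multiplicative ℤ) :
    ∀ ts : List G, (∀ u ∈ ts, pval p u = 0) → pval p ts.prod = 0 := by
  intro ts
  induction ts with
  | nil => simp [pval]
  | cons x r ih =>
    intro h
    rw [List.prod_cons, pval_mul, h x (by simp), ih (fun u hu => h u (by simp [hu]))]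
    ring

lemma raag_commute {V : Type*} (Γ : SimpleGraph V) {u v : V} (h : Γ.Adj u v) :
    Commute (raagGen Γ u) (raagGen Γ v) := by
  have hrel : (PresentedGroup.mk (raagRels Γ))
      (FreeGroup.of u * FreeGroup.of v * (FreeGroup.of u)⁻¹ * (FreeGroup.of v)⁻¹) = 1 := by
    have hmem : FreeGroup.of u * FreeGroup.of v * (FreeGroup.of u)⁻¹ * (FreeGroup.of v)⁻¹
        ∈ Subgroup.normalClosure (raagRels Γ) :=
      Subgroup.subset_normalClosure ⟨u, v, h, rfl⟩
    exact (QuotientGroup.eq_one_iff _).mpr hmem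
  have h2 : raagGen Γ u * raagGen Γ v * (raagGen Γ u)⁻¹ * (raagGen Γ v)⁻¹ = 1 := by
    simpa [raagGen, PresentedGroup.of, map_mul, map_inv] using hrel
  have h3 : raagGen Γ u * raagGen Γ v * (raagGen Γ u)⁻¹ = raagGen Γ v := by
    have := mul_inv_eq_one.mp h2; exact this
  show raagGen Γ u * raagGen Γ v = raagGen Γ v * raagGen Γ u
  calc raagGen Γ u * raagGen Γ v
      = (raagGen Γ u * raagGen Γ v * (raagGen Γ u)⁻¹) * raagGen Γ u := by group
    _ = raagGen Γ v * raagGen Γ u := by rw [h3]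

lemma raag_closure {V : Type*} (Γ : SimpleGraph V) :
    Subgroup.closure (Set.range (raagGen Γ)) = ⊤ := by
  have : Set.range (raagGen Γ) = Set.range (PresentedGroup.of : V → RAAG Γ) := rfl
  rw [this, PresentedGroup.closure_range_of]

end StmtAux
theorem stmt4 {V : Type*} [Fintype V] (Γ : SimpleGraph V)
    (hconn : Γ.Connected) (hcard : 2 ≤ Fintype.card V) (hjoin : IsJoin Γ)
    (p : RAAG Γ →* Multiplicative ℤ)
    (hp : ∀ v : V, p (raagGen Γ v) ≠ 1) :
    Subgroup.FG p.ker ∧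
    ∀ T : Set (RAAG Γ), T.Finite → T ⊆ (p.ker : Set (RAAG Γ)) →
      Subgroup.closure T = p.ker →
      FEquiv (distortion (Set.range (raagGen Γ)) T p.ker) (fun n => n) := by
  classical
  obtain ⟨V₁, V₂, ⟨a₀, ha₀⟩, ⟨b₀, hb₀⟩, hdisj, huniv, hadj⟩ := hjoin
  set G := RAAG Γ
  set S : Set G := Set.range (raagGen Γ) with hSdef
  set a : G := raagGen Γ a₀ with hadef
  set b : G := raagGen Γ b₀ with hbdef
  -- letters
  set L₁ : Set G := {x | ∃ v ∈ V₁, x = raagGen Γ v ∨ x = (raagGen Γ v)⁻¹} with hL₁def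
  set L₂ : Set G := {x | ∃ v ∈ V₂, x = raagGen Γ v ∨ x = (raagGen Γ v)⁻¹} with hL₂def
  have haL₁ : a ∈ L₁ := ⟨a₀, ha₀, Or.inl rfl⟩
  have hbL₂ : b ∈ L₂ := ⟨b₀, hb₀, Or.inl rfl⟩
  have hcross : ∀ x ∈ L₁, ∀ y ∈ L₂, Commute x y := by
    rintro x ⟨u, hu, hx⟩ y ⟨v, hv, hy⟩
    have hc : Commute (raagGen Γ u) (raagGen Γ v) := StmtAux.raag_commute Γ (hadj u hu v hv)
    rcases hx with rfl | rfl <;> rcases hy with rfl | rfl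
    · exact hc
    · exact hc.inv_right
    · exact hc.inv_left
    · exact hc.inv_left.inv_right
  -- p-values
  have hp0 : ∀ v : V, StmtAux.pval p (raagGen Γ v) ≠ 0 := by
    intro v h
    exact hp v (by simpa [StmtAux.pval] using h)
  set Mn : ℕ := Finset.univ.sup (fun v : V => (StmtAux.pval p (raagGen Γ v)).natAbs) with hMndef
  set Mz : ℤ := (Mn : ℤ) with hMzdef
  have hgenM : ∀ v : V, |StmtAux.pval p (raagGen Γ v)| ≤ Mz := by
    intro v
    rw [Int.abs_eq_natAbs, hMzdef]
    exact_mod_cast Finset.le_sup (f := fun v : V => (StmtAux.pval p (raagGen Γ v)).natAbs)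
      (Finset.mem_univ v)
  have hM1 : (1:ℤ) ≤ Mz :=
    le_trans (Int.one_le_abs (hp0 a₀)) (hgenM a₀)
  have hletM : ∀ x ∈ L₁ ∪ L₂, |StmtAux.pval p x| ≤ Mz := by
    rintro x (⟨v, _, hx | hx⟩ | ⟨v, _, hx | hx⟩) <;>
      simp only [hx, StmtAux.pval_inv, abs_neg] <;> exact hgenM v
  have ha0 : StmtAux.pval p a ≠ 0 := hp0 a₀
  have hb0 : StmtAux.pval p b ≠ 0 := hp0 b₀
  -- lifts
  set lam : ℤ → G := fun q => if q = 0 then 1 else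
    if h : ∃ g : G, StmtAux.pval p g = q then h.choose else 1 with hlamdef
  have hlam0 : lam 0 = 1 := by simp [hlamdef]
  have hlam : ∀ q ∈ Set.range (StmtAux.pval p), StmtAux.pval p (lam q) = q := by
    rintro q ⟨g, hg⟩
    by_cases h0 : q = 0
    · rw [h0, hlam0, StmtAux.pval_one]
    · have hex : ∃ g : G, StmtAux.pval p g = q := ⟨g, hg⟩
      simp only [hlamdef, if_neg h0, dif_pos hex]
      exact hex.choose_spec
  -- the distinguished finite generating set
  set T₀ : Set G := {g | StmtAux.pval p g = 0 ∧ ∃ q c q' : ℤ, ∃ x t' : G,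
    |q| ≤ Mz ∧ |c| ≤ 2*Mz ∧ |q'| ≤ Mz ∧ (x = 1 ∨ x ∈ L₁ ∪ L₂) ∧ (t' = a ∨ t' = b) ∧
    g = lam q * (x * t' ^ c) * (lam q')⁻¹} with hT₀def
  have hT₀sub : T₀ ⊆ (p.ker : Set G) := by
    intro g hg
    have : StmtAux.pval p g = 0 := hg.1
    simpa [MonoidHom.mem_ker, StmtAux.pval] using this
  have hT₀fin : T₀.Finite := by
    have hLfin : (({1} : Set G) ∪ (L₁ ∪ L₂)).Finite := by
      have h1 : L₁ ∪ L₂ ⊆ Set.range (raagGen Γ) ∪ Set.range (fun v => (raagGen Γ v)⁻¹) := by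
        rintro x (⟨v, _, hx | hx⟩ | ⟨v, _, hx | hx⟩)
        · exact Or.inl ⟨v, hx.symm⟩
        · exact Or.inr ⟨v, hx.symm⟩
        · exact Or.inl ⟨v, hx.symm⟩
        · exact Or.inr ⟨v, hx.symm⟩
      exact (Set.finite_singleton 1).union
        (((Set.finite_range _).union (Set.finite_range _)).subset h1)
    have himg : T₀ ⊆ (fun z : ℤ × ℤ × ℤ × G × G =>
        lam z.1 * (z.2.2.2.1 * z.2.2.2.2 ^ z.2.1) * (lam z.2.2.1)⁻¹) ''
        ((Set.Icc (-Mz) Mz) ×ˢ (Set.Icc (-(2*Mz)) (2*Mz)) ×ˢ (Set.Icc (-Mz) Mz) ×ˢ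
          (({1} : Set G) ∪ (L₁ ∪ L₂)) ×ˢ ({a, b} : Set G)) := by
      rintro g ⟨-, q, c, q', x, t', hq, hc, hq', hx, ht', rfl⟩
      refine ⟨(q, c, q', x, t'), ?_, rfl⟩
      refine ⟨abs_le.mp hq, abs_le.mp hc, abs_le.mp hq', ?_, ?_⟩
      · rcases hx with rfl | hx
        · exact Or.inl rfl
        · exact Or.inr hx
      · rcases ht' with rfl | rfl
        · exact Or.inl rfl
        · exact Or.inr rfl
    exact (Set.Finite.image _ ((Set.finite_Icc _ _).prod ((Set.finite_Icc _ _).prod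
      ((Set.finite_Icc _ _).prod (hLfin.prod ((Set.finite_singleton b).insert a)))))).subset himg
  -- the hmem hypotheses for the two runs of the core lemma
  have hmem : ∀ t' : G, (t' = a ∨ t' = b) → ∀ letters : Set G, letters ⊆ L₁ ∪ L₂ →
      ∀ (q c : ℤ) (x : G), x ∈ letters → |q| ≤ Mz → |c| ≤ 2*Mz →
      |q + StmtAux.pval p x + c * StmtAux.pval p t'| ≤ Mz →
      q ∈ Set.range (StmtAux.pval p) →
      lam q * (x * t' ^ c) * (lam (q + StmtAux.pval p x + c * StmtAux.pval p t'))⁻¹ ∈ T₀ := by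
    intro t' ht' letters hlet q c x hx hq hc hq' hqr
    obtain ⟨g₀, hg₀⟩ := hqr
    have hq'r : q + StmtAux.pval p x + c * StmtAux.pval p t' ∈ Set.range (StmtAux.pval p) :=
      ⟨g₀ * x * t' ^ c, by rw [StmtAux.pval_mul, StmtAux.pval_mul, StmtAux.pval_zpow, hg₀]⟩
    constructor
    · rw [StmtAux.pval_mul, StmtAux.pval_mul, StmtAux.pval_mul, StmtAux.pval_inv,
        StmtAux.pval_zpow, hlam q ⟨g₀, hg₀⟩, hlam _ hq'r]
      ring
    · exact ⟨q, c, _, x, t', hq, hc, hq', Or.inr (hlet hx), ht', rfl⟩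
  -- the key factorization lemma
  have hkey : ∀ l : List G, (∀ x ∈ l, x ∈ S ∨ x⁻¹ ∈ S) → StmtAux.pval p l.prod = 0 →
      ∃ ts : List G, (∀ u ∈ ts, u ∈ T₀) ∧
        ts.length ≤ (2*Mn+1) * l.length + 1 ∧ ts.prod = l.prod := by
    intro l hllet hl0
    have hl12 : ∀ x ∈ l, x ∈ L₁ ∨ x ∈ L₂ := by
      intro x hx
      have hx' : (∃ v, x = raagGen Γ v) ∨ (∃ v, x = (raagGen Γ v)⁻¹) := by
        rcases hllet x hx with ⟨v, hv⟩ | ⟨v, hv⟩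
        · exact Or.inl ⟨v, hv.symm⟩
        · exact Or.inr ⟨v, by rw [hv, inv_inv]⟩
      rcases hx' with ⟨v, rfl⟩ | ⟨v, rfl⟩ <;>
      · have hv12 : v ∈ V₁ ∪ V₂ := by rw [huniv]; trivial
        rcases hv12 with hv1 | hv1
        · exact Or.inl ⟨v, hv1, by simp⟩
        · exact Or.inr ⟨v, hv1, by simp⟩
    obtain ⟨l₁, l₂, hl₁, hl₂, hlen, hprod⟩ :=
      StmtAux.partition_word (fun x y hx hy => hcross x hx y hy) l hl12
    -- stage 1 : conjugating the V₁-letters, with companion b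
    obtain ⟨ts₁, e₁, q₁', hts₁mem, hts₁len, he₁, hq₁'M, hq₁'eq, hts₁prod⟩ :=
      StmtAux.core p lam hlam Mz b hb0 (hgenM b₀) L₁
        (fun x hx => hcross x hx b hbL₂)
        (fun x hx => hletM x (Or.inl hx))
        T₀ (hmem b (Or.inr rfl) L₁ Set.subset_union_left)
        l₁ hl₁ 0 (by simpa using le_trans zero_le_one hM1) ⟨1, StmtAux.pval_one p⟩
    rw [hlam0, one_mul] at hts₁prod
    rw [zero_add] at hq₁'eq
    -- stage 2 : the V₂-letters preceded by b^(-e₁), with companion a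
    set s : G := if 0 ≤ e₁ then b⁻¹ else b with hsdef
    have hsL₂ : s ∈ L₂ := by
      rcases le_or_gt 0 e₁ with h | h
      · rw [hsdef, if_pos h]; exact ⟨b₀, hb₀, Or.inr rfl⟩
      · rw [hsdef, if_neg (not_le.mpr h)]; exact hbL₂
    set xs₂ : List G := List.replicate e₁.natAbs s ++ l₂ with hxs₂def
    have hxs₂mem : ∀ x ∈ xs₂, x ∈ L₂ := by
      intro x hx
      rcases List.mem_append.mp hx with h | h
      · rw [List.eq_of_mem_replicate h]; exact hsL₂
      · exact hl₂ x h
    have hxs₂prod : xs₂.prod = b ^ (-e₁) * l₂.prod := by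
      rw [hxs₂def, List.prod_append, List.prod_replicate]
      congr 1
      rcases le_or_gt 0 e₁ with h | h
      · rw [hsdef, if_pos h, ← zpow_natCast, Int.natAbs_of_nonneg h, inv_zpow, ← zpow_neg]
      · rw [hsdef, if_neg (not_le.mpr h), ← zpow_natCast,
          Int.ofNat_natAbs_of_nonpos (le_of_lt h)]
    have hq₁'r : q₁' ∈ Set.range (StmtAux.pval p) :=
      ⟨l₁.prod * b ^ e₁, by rw [StmtAux.pval_mul, StmtAux.pval_zpow, hq₁'eq]⟩
    obtain ⟨ts₂, e₂, q₂', hts₂mem, hts₂len, he₂, hq₂'M, hq₂'eq, hts₂prod⟩ :=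
      StmtAux.core p lam hlam Mz a ha0 (hgenM a₀) L₂
        (fun x hx => (hcross a haL₁ x hx).symm)
        (fun x hx => hletM x (Or.inr hx))
        T₀ (hmem a (Or.inl rfl) L₂ Set.subset_union_right)
        xs₂ hxs₂mem q₁' hq₁'M hq₁'r
    -- the final correction term
    set u₃ : G := lam q₂' * a ^ (-e₂) with hu₃def
    have hfinal : ts₁.prod * ts₂.prod * u₃ = l.prod := by
      rw [hts₁prod, hts₂prod, hxs₂prod, hu₃def, ← hprod]
      group
    have hq₂'r : q₂' ∈ Set.range (StmtAux.pval p) :=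
      ⟨l₁.prod * b ^ e₁ * xs₂.prod * a ^ e₂, by
        rw [StmtAux.pval_mul, StmtAux.pval_mul, StmtAux.pval_mul,
          StmtAux.pval_zpow, StmtAux.pval_zpow, hq₂'eq, hq₁'eq]
        try ring⟩
    have hu₃0 : StmtAux.pval p u₃ = 0 := by
      have h1 : StmtAux.pval p ts₁.prod = 0 :=
        StmtAux.pval_prod_zero p ts₁ (fun u hu => (hts₁mem u hu).1)
      have h2 : StmtAux.pval p ts₂.prod = 0 :=
        StmtAux.pval_prod_zero p ts₂ (fun u hu => (hts₂mem u hu).1)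
      have := congrArg (StmtAux.pval p) hfinal
      rw [StmtAux.pval_mul, StmtAux.pval_mul, h1, h2, hl0] at this
      linarith
    have he₂M : |e₂| ≤ 2*Mz := by
      have h1 : StmtAux.pval p u₃ = q₂' - e₂ * StmtAux.pval p a := by
        rw [hu₃def, StmtAux.pval_mul, StmtAux.pval_zpow, hlam q₂' hq₂'r]; ring
      have h2 : e₂ * StmtAux.pval p a = q₂' := by rw [hu₃0] at h1; linarith
      have h3 : |e₂| ≤ |e₂| * |StmtAux.pval p a| :=
        le_mul_of_one_le_right (abs_nonneg _) (Int.one_le_abs ha0)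
      rw [← abs_mul, h2] at h3
      linarith
    have hu₃T₀ : u₃ ∈ T₀ := by
      refine ⟨hu₃0, q₂', -e₂, 0, 1, a, hq₂'M, by rwa [abs_neg], by simpa using le_trans zero_le_one hM1,
        Or.inl rfl, Or.inl rfl, ?_⟩
      rw [hlam0, hu₃def]; group
    refine ⟨ts₁ ++ (ts₂ ++ [u₃]), ?_, ?_, ?_⟩
    · intro u hu
      rcases List.mem_append.mp hu with h | h
      · exact hts₁mem u h
      rcases List.mem_append.mp h with h | h
      · exact hts₂mem u h
      · rw [List.mem_singleton.mp h]; exact hu₃T₀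
    · have hnat : e₁.natAbs ≤ 2 * Mn * l₁.length := by
        have : ((e₁.natAbs : ℤ)) ≤ ((2 * Mn * l₁.length : ℕ) : ℤ) := by
          rw [← Int.abs_eq_natAbs]; push_cast; exact he₁
        exact_mod_cast this
      simp only [List.length_append, List.length_singleton, hts₁len, hts₂len, hxs₂def,
        List.length_replicate]
      have h5 : l₁.length + l₂.length = l.length := hlen
      nlinarith [hnat]
    · rw [List.prod_append, List.prod_append, List.prod_singleton, ← mul_assoc]
      exact hfinal
  -- T₀ generates the kernel
  have hword : ∀ g : G, StmtAux.HasWord S g := by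
    intro g
    exact StmtAux.hasWord_of_mem_closure (by rw [hSdef, StmtAux.raag_closure]; trivial)
  have hker0 : ∀ h ∈ p.ker, StmtAux.pval p h = 0 := by
    intro h hh
    simpa [StmtAux.pval, MonoidHom.mem_ker.mp hh] using rfl
  have hclosure : Subgroup.closure T₀ = p.ker := by
    apply le_antisymm
    · exact (Subgroup.closure_le _).mpr hT₀sub
    · intro h hh
      obtain ⟨l, hlen, hllet, hlprod⟩ := StmtAux.exists_word (hword h)
      obtain ⟨ts, htsmem, _, htsprod⟩ := hkey l hllet (by rw [hlprod]; exact hker0 h hh)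
      rw [← hlprod, ← htsprod]
      exact Subgroup.list_prod_mem _ (fun u hu => Subgroup.subset_closure (htsmem u hu))
  constructor
  · exact (Subgroup.fg_iff p.ker).mpr ⟨T₀, hclosure, hT₀fin⟩
  intro T hTfin hTsub hTcl
  -- each element of T₀ has bounded T-length
  have hTword : ∀ u ∈ T₀, StmtAux.HasWord T u := by
    intro u hu
    exact StmtAux.hasWord_of_mem_closure (by rw [hTcl]; exact hT₀sub hu)
  obtain ⟨C₀, hC₀⟩ : ∃ C : ℕ, ∀ u ∈ T₀, wordLength T u ≤ C := by
    obtain ⟨C, hC⟩ := (hT₀fin.image (wordLength T)).bddAbove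
    exact ⟨C, fun u hu => hC (Set.mem_image_of_mem _ hu)⟩
  have hbound : ∀ r : ℕ, ∀ h ∈ p.ker, wordLength S h ≤ r →
      wordLength T h ≤ C₀ * ((2*Mn+1) * r + 1) := by
    intro r h hh hr
    obtain ⟨l, hlen, hllet, hlprod⟩ := StmtAux.exists_word (hword h)
    obtain ⟨ts, htsmem, htslen, htsprod⟩ := hkey l hllet (by rw [hlprod]; exact hker0 h hh)
    have hsub : ∀ u ∈ ts, ∃ lu : List G, lu.length ≤ C₀ ∧
        (∀ y ∈ lu, y ∈ T ∨ y⁻¹ ∈ T) ∧ lu.prod = u := by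
      intro u hu
      obtain ⟨lu, h1, h2, h3⟩ := StmtAux.exists_word (hTword u (htsmem u hu))
      exact ⟨lu, by rw [h1]; exact hC₀ u (htsmem u hu), h2, h3⟩
    obtain ⟨L, hL1, hL2, hL3⟩ := StmtAux.concat_word ts hsub
    have h4 : wordLength T h ≤ L.length :=
      StmtAux.wordLength_le hL2 (by rw [hL3, htsprod, hlprod])
    have h5 : ts.length ≤ (2*Mn+1) * r + 1 := by
      have : l.length ≤ r := by rw [hlen]; exact hr
      calc ts.length ≤ (2*Mn+1) * l.length + 1 := htslen
        _ ≤ (2*Mn+1) * r + 1 := by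
            have := Nat.mul_le_mul_left (2*Mn+1) this; omega
    calc wordLength T h ≤ L.length := h4
      _ ≤ C₀ * ts.length := hL1
      _ ≤ C₀ * ((2*Mn+1) * r + 1) := Nat.mul_le_mul_left C₀ h5
  have hdistle : ∀ r : ℕ, distortion S T p.ker r ≤ C₀ * ((2*Mn+1) * r + 1) := by
    intro r
    apply csSup_le
    · refine ⟨wordLength T 1, 1, p.ker.one_mem, ?_, rfl⟩
      have : wordLength S (1 : G) ≤ ([] : List G).length :=
        StmtAux.wordLength_le (by simp) (by simp)
      simp only [List.length_nil] at this
      omega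
    · rintro n ⟨h, hh, hr, rfl⟩
      exact hbound r h hh hr
  constructor
  · refine ⟨1, 1, C₀ * (2*Mn+1) + C₀ + 1, 0, one_pos, one_pos, by positivity, ?_⟩
    intro x hx
    have h1 := hdistle x
    simp only [one_mul]
    nlinarith
  · refine ⟨1, 1, 1, 0, one_pos, one_pos, one_pos, ?_⟩
    intro x hx
    simp only [one_mul]
    omega
end

section
/- Let A₁ and A₂ be finitely generated groups, let G = A₁ × A₂, and let p : G → ℤ be a group homomorphism whose restrictions to A₁ × {1} and to {1} × A₂ are both surjective onto ℤ. Then the kernel N₁ = ker p is finitely generated and its distortion in G is linear: there is a finite generating set T of N₁, a finite generating set S of G, and a constant K such that every h ∈ N₁ with |h|_S ≤ n satisfies |h|_T ≤ (K+1)n. -/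
section Aux

variable {G : Type*} [Group G]

/-- A list spelling `a ^ j` by `j.natAbs` letters equal to `a` or `a⁻¹`. -/
noncomputable def zword (j : ℤ) (a : G) : List G :=
  if 0 ≤ j then List.replicate j.toNat a else List.replicate (-j).toNat a⁻¹

lemma zword_length (j : ℤ) (a : G) : (zword j a).length = j.natAbs := by
  unfold zword; split <;> simp <;> omega

lemma zword_prod (j : ℤ) (a : G) : (zword j a).prod = a ^ j := by
  unfold zword
  split_ifs with h
  · rw [List.prod_replicate, ← zpow_natCast, Int.toNat_of_nonneg h]
  · rw [List.prod_replicate, ← zpow_natCast, inv_zpow, ← zpow_neg]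
    congr 1
    omega

lemma zword_mem {j : ℤ} {a x : G} (h : x ∈ zword j a) : x = a ∨ x = a⁻¹ := by
  unfold zword at h
  split_ifs at h
  · exact Or.inl (List.eq_of_mem_replicate h)
  · exact Or.inr (List.eq_of_mem_replicate h)

lemma wordLength_le {S : Set G} {g : G} {l : List G}
    (hl : ∀ x ∈ l, x ∈ S ∨ x⁻¹ ∈ S) (hp : l.prod = g) :
    wordLength S g ≤ l.length :=
  Nat.sInf_le ⟨l, rfl, hl, hp⟩

lemma exists_word {S : Set G} (hS : Subgroup.closure S = ⊤) (g : G) :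
    ∃ l : List G, l.length = wordLength S g ∧ (∀ x ∈ l, x ∈ S ∨ x⁻¹ ∈ S) ∧ l.prod = g := by
  have hg : g ∈ Submonoid.closure (S ∪ S⁻¹) := by
    rw [← Subgroup.closure_toSubmonoid, Subgroup.mem_toSubmonoid, hS]
    exact Subgroup.mem_top g
  obtain ⟨l, hl, hp⟩ := Submonoid.exists_list_of_mem_closure hg
  have hl' : ∀ x ∈ l, x ∈ S ∨ x⁻¹ ∈ S := by
    intro x hx
    rcases hl x hx with h | h
    · exact Or.inl h
    · exact Or.inr (Set.mem_inv.mp h)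
  have hne : {n | ∃ l : List G, l.length = n ∧ (∀ x ∈ l, x ∈ S ∨ x⁻¹ ∈ S) ∧ l.prod = g}.Nonempty :=
    ⟨l.length, l, rfl, hl', hp⟩
  obtain ⟨l', h1, h2, h3⟩ := Nat.sInf_mem hne
  exact ⟨l', h1, h2, h3⟩

lemma natAbs_list_le (q : G → ℤ) (hq : ∀ a b, q (a * b) = q a + q b) (M : ℕ) :
    ∀ l : List G, (∀ a ∈ l, (q a).natAbs ≤ M) → (q l.prod).natAbs ≤ M * l.length := by
  have hone : q 1 = 0 := by have := hq 1 1; simpa using this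
  intro l
  induction l with
  | nil => simp [hone]
  | cons a t ih =>
    intro h
    have h1 : (q a).natAbs ≤ M := h a List.mem_cons_self
    have h2 : (q t.prod).natAbs ≤ M * t.length := ih fun b hb => h b (List.mem_cons_of_mem a hb)
    have h3 : (q (a * t.prod)).natAbs ≤ (q a).natAbs + (q t.prod).natAbs := by
      rw [hq]; exact Int.natAbs_add_le _ _
    have h4 : M * (t.length + 1) = M * t.length + M := by ring
    simp only [List.prod_cons, List.length_cons, h4]
    omega

end Aux

theorem stmt6 {A₁ A₂ : Type*} [Group A₁] [Group A₂]
    (h1 : Group.FG A₁) (h2 : Group.FG A₂)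
    (p : A₁ × A₂ →* Multiplicative ℤ)
    (hs1 : Function.Surjective fun a : A₁ => p (a, 1))
    (hs2 : Function.Surjective fun b : A₂ => p (1, b)) :
    Subgroup.FG p.ker ∧
    ∃ (S T : Set (A₁ × A₂)) (K : ℕ),
      S.Finite ∧ Subgroup.closure S = ⊤ ∧
      T.Finite ∧ T ⊆ (p.ker : Set (A₁ × A₂)) ∧ Subgroup.closure T = p.ker ∧
      ∀ (n : ℕ) (h : A₁ × A₂), h ∈ p.ker → wordLength S h ≤ n →
        wordLength T h ≤ (K + 1) * n := by
  classical
  obtain ⟨s₁, hs₁top, hs₁fin⟩ := Group.fg_iff.mp h1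
  obtain ⟨s₂, hs₂top, hs₂fin⟩ := Group.fg_iff.mp h2
  obtain ⟨a₀, ha₀⟩ := hs1 (Multiplicative.ofAdd 1)
  obtain ⟨b₀, hb₀⟩ := hs2 (Multiplicative.ofAdd 1)
  -- the additive values of p on the two factors
  set q₁ : A₁ → ℤ := fun a => (p (a, 1)).toAdd with hq₁def
  set q₂ : A₂ → ℤ := fun b => (p (1, b)).toAdd with hq₂def
  have hq₁mul : ∀ a b : A₁, q₁ (a * b) = q₁ a + q₁ b := by
    intro a b
    show (p (a * b, 1)).toAdd = (p (a, 1)).toAdd + (p (b, 1)).toAdd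
    rw [show ((a * b, 1) : A₁ × A₂) = (a, 1) * (b, 1) by rw [Prod.mk_mul_mk, mul_one],
      map_mul, toAdd_mul]
  have hq₂mul : ∀ a b : A₂, q₂ (a * b) = q₂ a + q₂ b := by
    intro a b
    show (p (1, a * b)).toAdd = (p (1, a)).toAdd + (p (1, b)).toAdd
    rw [show ((1, a * b) : A₁ × A₂) = (1, a) * (1, b) by rw [Prod.mk_mul_mk, mul_one],
      map_mul, toAdd_mul]
  have hq₁one : q₁ 1 = 0 := by simp [hq₁def, Prod.mk_one_one]
  have hq₂one : q₂ 1 = 0 := by simp [hq₂def, Prod.mk_one_one]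
  have hq₁inv : ∀ a : A₁, q₁ a⁻¹ = -(q₁ a) := by
    intro a
    have := hq₁mul a⁻¹ a
    simp [hq₁one] at this
    omega
  have hq₂inv : ∀ b : A₂, q₂ b⁻¹ = -(q₂ b) := by
    intro b
    have := hq₂mul b⁻¹ b
    simp [hq₂one] at this
    omega
  have hq₁zpow : ∀ (a : A₁) (k : ℤ), q₁ (a ^ k) = k * q₁ a := by
    intro a k
    show (p (a ^ k, 1)).toAdd = k * (p (a, 1)).toAdd
    rw [show ((a ^ k, 1) : A₁ × A₂) = (a, 1) ^ k by rw [Prod.pow_mk, one_zpow],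
      map_zpow, toAdd_zpow, smul_eq_mul]
  have hq₂zpow : ∀ (b : A₂) (k : ℤ), q₂ (b ^ k) = k * q₂ b := by
    intro b k
    show (p (1, b ^ k)).toAdd = k * (p (1, b)).toAdd
    rw [show ((1, b ^ k) : A₁ × A₂) = (1, b) ^ k by rw [Prod.pow_mk, one_zpow],
      map_zpow, toAdd_zpow, smul_eq_mul]
  have hsplit : ∀ (a : A₁) (b : A₂), (p (a, b)).toAdd = q₁ a + q₂ b := by
    intro a b
    show (p (a, b)).toAdd = (p (a, 1)).toAdd + (p (1, b)).toAdd
    rw [show ((a, b) : A₁ × A₂) = (a, 1) * (1, b) by rw [Prod.mk_mul_mk, mul_one, one_mul],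
      map_mul, toAdd_mul]
  have hker_iff : ∀ g : A₁ × A₂, g ∈ p.ker ↔ (p g).toAdd = 0 := by
    intro g
    rw [MonoidHom.mem_ker]
    constructor
    · intro h; rw [h]; simp
    · intro h
      have : (p g).toAdd = (1 : Multiplicative ℤ).toAdd := by simpa using h
      exact Multiplicative.toAdd.injective this
  have ha₀' : q₁ a₀ = 1 := by simp [hq₁def, ha₀]
  have hb₀' : q₂ b₀ = 1 := by simp [hq₂def, hb₀]
  -- generating sets
  set U₁ : Set A₁ := s₁ ∪ {a₀, 1} with hU₁def
  set U₂ : Set A₂ := s₂ ∪ {b₀, 1} with hU₂def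
  have hU₁fin : U₁.Finite := hs₁fin.union ((Set.finite_singleton _).insert _)
  have hU₂fin : U₂.Finite := hs₂fin.union ((Set.finite_singleton _).insert _)
  have hU₁top : Subgroup.closure U₁ = ⊤ :=
    eq_top_iff.mpr (hs₁top ▸ Subgroup.closure_mono Set.subset_union_left)
  have hU₂top : Subgroup.closure U₂ = ⊤ :=
    eq_top_iff.mpr (hs₂top ▸ Subgroup.closure_mono Set.subset_union_left)
  have ha₀U : a₀ ∈ U₁ := Or.inr (Or.inl rfl)
  have h1U₁ : (1 : A₁) ∈ U₁ := Or.inr (Or.inr rfl)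
  have hb₀U : b₀ ∈ U₂ := Or.inr (Or.inl rfl)
  have h1U₂ : (1 : A₂) ∈ U₂ := Or.inr (Or.inr rfl)
  set M : ℕ := hU₁fin.toFinset.sup fun a => (q₁ a).natAbs with hMdef
  have hM : ∀ a ∈ U₁, (q₁ a).natAbs ≤ M := by
    intro a ha
    rw [hMdef]
    exact Finset.le_sup (f := fun a => (q₁ a).natAbs) (hU₁fin.mem_toFinset.mpr ha)
  -- generators of the kernel
  set t₁ : A₁ → A₁ × A₂ := fun a => (a, b₀ ^ (-(q₁ a))) with ht₁def
  set t₂ : A₂ → A₁ × A₂ := fun b => (a₀ ^ (-(q₂ b)), b) with ht₂def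
  set c : A₁ × A₂ := (a₀, b₀⁻¹) with hcdef
  set S : Set (A₁ × A₂) := (MonoidHom.inl A₁ A₂) '' U₁ ∪ (MonoidHom.inr A₁ A₂) '' U₂ with hSdef
  set T : Set (A₁ × A₂) := (t₁ '' U₁ ∪ t₂ '' U₂) ∪ {c} with hTdef
  -- basic properties of the kernel generators
  have ht₁inv : ∀ a : A₁, t₁ a⁻¹ = (t₁ a)⁻¹ := by
    intro a
    show (a⁻¹, b₀ ^ (-(q₁ a⁻¹))) = (a, b₀ ^ (-(q₁ a)))⁻¹
    rw [Prod.inv_mk, hq₁inv, neg_neg]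
    simp [zpow_neg]
  have ht₂inv : ∀ b : A₂, t₂ b⁻¹ = (t₂ b)⁻¹ := by
    intro b
    show (a₀ ^ (-(q₂ b⁻¹)), b⁻¹) = (a₀ ^ (-(q₂ b)), b)⁻¹
    rw [Prod.inv_mk, hq₂inv, neg_neg]
    simp [zpow_neg]
  have ht₁prod : ∀ m : List A₁, (m.map t₁).prod = (m.prod, b₀ ^ (-(q₁ m.prod))) := by
    intro m
    induction m with
    | nil => simp [hq₁one, Prod.mk_one_one]
    | cons a t ih =>
      rw [List.map_cons, List.prod_cons, List.prod_cons, ih]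
      show (a, b₀ ^ (-(q₁ a))) * (t.prod, b₀ ^ (-(q₁ t.prod))) = _
      rw [Prod.mk_mul_mk, ← zpow_add, hq₁mul, neg_add]
  have ht₂prod : ∀ m : List A₂, (m.map t₂).prod = (a₀ ^ (-(q₂ m.prod)), m.prod) := by
    intro m
    induction m with
    | nil => simp [hq₂one, Prod.mk_one_one]
    | cons a t ih =>
      rw [List.map_cons, List.prod_cons, List.prod_cons, ih]
      show (a₀ ^ (-(q₂ a)), a) * (a₀ ^ (-(q₂ t.prod)), t.prod) = _
      rw [Prod.mk_mul_mk, ← zpow_add, hq₂mul, neg_add]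
  have ht₁ker : ∀ a : A₁, t₁ a ∈ p.ker := by
    intro a
    rw [hker_iff]
    show (p (a, b₀ ^ (-(q₁ a)))).toAdd = 0
    rw [hsplit, hq₂zpow, hb₀']
    ring
  have ht₂ker : ∀ b : A₂, t₂ b ∈ p.ker := by
    intro b
    rw [hker_iff]
    show (p (a₀ ^ (-(q₂ b)), b)).toAdd = 0
    rw [hsplit, hq₁zpow, ha₀']
    ring
  have hc_ker : c ∈ p.ker := by
    rw [hker_iff]
    show (p (a₀, b₀⁻¹)).toAdd = 0
    rw [hsplit, ha₀', hq₂inv, hb₀']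
    ring
  have hTsub : T ⊆ (p.ker : Set (A₁ × A₂)) := by
    rintro x ((⟨a, -, rfl⟩ | ⟨b, -, rfl⟩) | rfl)
    · exact ht₁ker a
    · exact ht₂ker b
    · exact hc_ker
  have hTfin : T.Finite := ((hU₁fin.image t₁).union (hU₂fin.image t₂)).union
    (Set.finite_singleton c)
  have hSfin : S.Finite := (hU₁fin.image _).union (hU₂fin.image _)
  have hStop : Subgroup.closure S = ⊤ := by
    rw [Subgroup.eq_top_iff']
    intro g
    obtain ⟨a, b⟩ := g
    have hmem1 : ((a, 1) : A₁ × A₂) ∈ Subgroup.closure S := by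
      have hmm : ((a, 1) : A₁ × A₂) ∈ Subgroup.closure ((MonoidHom.inl A₁ A₂) '' U₁) := by
        rw [← MonoidHom.map_closure, hU₁top]
        exact Subgroup.mem_map.mpr ⟨a, Subgroup.mem_top a, rfl⟩
      exact Subgroup.closure_mono Set.subset_union_left hmm
    have hmem2 : ((1, b) : A₁ × A₂) ∈ Subgroup.closure S := by
      have hmm : ((1, b) : A₁ × A₂) ∈ Subgroup.closure ((MonoidHom.inr A₁ A₂) '' U₂) := by
        rw [← MonoidHom.map_closure, hU₂top]
        exact Subgroup.mem_map.mpr ⟨b, Subgroup.mem_top b, rfl⟩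
      exact Subgroup.closure_mono Set.subset_union_right hmm
    have hab : ((a, b) : A₁ × A₂) = (a, 1) * (1, b) := by
      rw [Prod.mk_mul_mk, mul_one, one_mul]
    rw [hab]
    exact mul_mem hmem1 hmem2
  -- the core rewriting lemma
  have core : ∀ l : List (A₁ × A₂), (∀ x ∈ l, x ∈ S ∨ x⁻¹ ∈ S) → l.prod ∈ p.ker →
      ∃ w : List (A₁ × A₂), (∀ x ∈ w, x ∈ T ∨ x⁻¹ ∈ T) ∧ w.prod = l.prod ∧
        w.length ≤ (3 * M + 2) * l.length := by
    intro l hl hker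
    set l₁ : List A₁ := l.map Prod.fst with hl₁def
    set l₂ : List A₂ := l.map Prod.snd with hl₂def
    have hxy : l.prod = (l₁.prod, l₂.prod) := by
      refine Prod.ext ?_ ?_
      · simpa [hl₁def] using (MonoidHom.fst A₁ A₂).map_list_prod l
      · simpa [hl₂def] using (MonoidHom.snd A₁ A₂).map_list_prod l
    have hl₁mem : ∀ a ∈ l₁, a ∈ U₁ ∨ a⁻¹ ∈ U₁ := by
      intro a ha
      rw [hl₁def, List.mem_map] at ha
      obtain ⟨g, hg, rfl⟩ := ha
      rcases hl g hg with hS | hS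
      · rcases hS with ⟨a', ha', rfl⟩ | ⟨b', hb', rfl⟩
        · simpa using Or.inl ha'
        · simpa using h1U₁
      · rcases hS with ⟨a', ha', he⟩ | ⟨b', hb', he⟩
        · obtain rfl : g = ((MonoidHom.inl A₁ A₂) a')⁻¹ := inv_eq_iff_eq_inv.mp he.symm
          right
          simpa using ha'
        · obtain rfl : g = ((MonoidHom.inr A₁ A₂) b')⁻¹ := inv_eq_iff_eq_inv.mp he.symm
          left
          simpa using h1U₁
    have hl₂mem : ∀ b ∈ l₂, b ∈ U₂ ∨ b⁻¹ ∈ U₂ := by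
      intro b hb
      rw [hl₂def, List.mem_map] at hb
      obtain ⟨g, hg, rfl⟩ := hb
      rcases hl g hg with hS | hS
      · rcases hS with ⟨a', ha', rfl⟩ | ⟨b', hb', rfl⟩
        · simpa using h1U₂
        · simpa using Or.inl hb'
      · rcases hS with ⟨a', ha', he⟩ | ⟨b', hb', he⟩
        · obtain rfl : g = ((MonoidHom.inl A₁ A₂) a')⁻¹ := inv_eq_iff_eq_inv.mp he.symm
          left
          simpa using h1U₂
        · obtain rfl : g = ((MonoidHom.inr A₁ A₂) b')⁻¹ := inv_eq_iff_eq_inv.mp he.symm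
          right
          simpa using hb'
    set k : ℤ := q₁ l₁.prod with hkdef
    have h0 : (p l.prod).toAdd = 0 := (hker_iff _).mp hker
    rw [hxy, hsplit] at h0
    set m₁ : List A₁ := l₁ ++ zword (-k) a₀ with hm₁def
    set m₂ : List A₂ := zword k b₀ ++ l₂ with hm₂def
    have hm₁prod : m₁.prod = l₁.prod * a₀ ^ (-k) := by
      rw [hm₁def, List.prod_append, zword_prod]
    have hm₂prod : m₂.prod = b₀ ^ k * l₂.prod := by
      rw [hm₂def, List.prod_append, zword_prod]
    have hq₁m₁ : q₁ m₁.prod = 0 := by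
      rw [hm₁prod, hq₁mul, hq₁zpow, ha₀', ← hkdef]
      ring
    have hq₂m₂ : q₂ m₂.prod = 0 := by
      rw [hm₂prod, hq₂mul, hq₂zpow, hb₀']
      omega
    have hck : c ^ k = ((a₀ ^ k, b₀ ^ (-k)) : A₁ × A₂) := by
      rw [hcdef, Prod.pow_mk, inv_zpow, ← zpow_neg]
    set w : List (A₁ × A₂) := (m₁.map t₁) ++ (zword k c ++ m₂.map t₂) with hwdef
    have hwlet : ∀ x ∈ w, x ∈ T ∨ x⁻¹ ∈ T := by
      intro x hx
      rw [hwdef] at hx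
      simp only [List.mem_append, List.mem_map] at hx
      rcases hx with ⟨a, ha, rfl⟩ | hc | ⟨b, hb, rfl⟩
      · have haU : a ∈ U₁ ∨ a⁻¹ ∈ U₁ := by
          rw [hm₁def, List.mem_append] at ha
          rcases ha with ha | ha
          · exact hl₁mem a ha
          · rcases zword_mem ha with rfl | rfl
            · exact Or.inl ha₀U
            · exact Or.inr (by simpa using ha₀U)
        rcases haU with haU | haU
        · exact Or.inl (Or.inl (Or.inl ⟨a, haU, rfl⟩))
        · right
          rw [← ht₁inv]
          exact Or.inl (Or.inl ⟨a⁻¹, haU, rfl⟩)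
      · rcases zword_mem hc with rfl | rfl
        · exact Or.inl (Or.inr rfl)
        · right
          rw [inv_inv]
          exact Or.inr rfl
      · have hbU : b ∈ U₂ ∨ b⁻¹ ∈ U₂ := by
          rw [hm₂def, List.mem_append] at hb
          rcases hb with hb | hb
          · rcases zword_mem hb with rfl | rfl
            · exact Or.inl hb₀U
            · exact Or.inr (by simpa using hb₀U)
          · exact hl₂mem b hb
        rcases hbU with hbU | hbU
        · exact Or.inl (Or.inl (Or.inr ⟨b, hbU, rfl⟩))
        · right
          rw [← ht₂inv]
          exact Or.inl (Or.inr ⟨b⁻¹, hbU, rfl⟩)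
    have hw₁ : (m₁.map t₁).prod = ((m₁.prod, 1) : A₁ × A₂) := by
      rw [ht₁prod, hq₁m₁]
      norm_num
    have hw₂ : (m₂.map t₂).prod = ((1, m₂.prod) : A₁ × A₂) := by
      rw [ht₂prod, hq₂m₂]
      norm_num
    have hwprod : w.prod = l.prod := by
      rw [hwdef, List.prod_append, List.prod_append, hw₁, zword_prod, hck, hw₂, hxy,
        hm₁prod, hm₂prod, Prod.mk_mul_mk, Prod.mk_mul_mk]
      refine Prod.ext ?_ ?_ <;> simp [mul_assoc, ← mul_assoc, ← zpow_add]
    have hk_le : k.natAbs ≤ M * l.length := by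
      have hlen₁ : l₁.length = l.length := by rw [hl₁def, List.length_map]
      have hbb : ∀ a ∈ l₁, (q₁ a).natAbs ≤ M := by
        intro a ha
        rcases hl₁mem a ha with haU | haU
        · exact hM a haU
        · have := hM _ haU
          rwa [hq₁inv, Int.natAbs_neg] at this
      have := natAbs_list_le q₁ hq₁mul M l₁ hbb
      rw [hlen₁] at this
      rw [hkdef]
      exact this
    have hwlen : w.length ≤ (3 * M + 2) * l.length := by
      have hlen₁ : l₁.length = l.length := by rw [hl₁def, List.length_map]
      have hlen₂ : l₂.length = l.length := by rw [hl₂def, List.length_map]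
      have h1 : w.length = (l.length + k.natAbs) + (k.natAbs + (k.natAbs + l.length)) := by
        rw [hwdef, List.length_append, List.length_append, List.length_map, List.length_map,
          hm₁def, hm₂def, List.length_append, List.length_append, zword_length, zword_length,
          zword_length, hlen₁, hlen₂, Int.natAbs_neg]
      have h2 : (3 * M + 2) * l.length = 3 * (M * l.length) + 2 * l.length := by ring
      omega
    exact ⟨w, hwlet, hwprod, hwlen⟩
  have hTclos : Subgroup.closure T = p.ker := by
    apply le_antisymm
    · rw [Subgroup.closure_le]
      exact hTsub
    · intro h hh
      obtain ⟨l, -, hl, hp'⟩ := exists_word hStop h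
      obtain ⟨w, hw, hwp, -⟩ := core l hl (by rw [hp']; exact hh)
      have hfin : w.prod = h := hwp.trans hp'
      rw [← hfin]
      refine list_prod_mem ?_
      intro x hx
      rcases hw x hx with hxT | hxT
      · exact Subgroup.subset_closure hxT
      · exact (Subgroup.closure T).inv_mem_iff.mp (Subgroup.subset_closure hxT)
  refine ⟨(Subgroup.fg_iff _).mpr ⟨T, hTclos, hTfin⟩, S, T, 3 * M + 1, hSfin, hStop, hTfin,
    hTsub, hTclos, ?_⟩
  intro n h hh hlen
  obtain ⟨l, hlenl, hl, hp'⟩ := exists_word hStop h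
  obtain ⟨w, hw, hwp, hwlen⟩ := core l hl (by rw [hp']; exact hh)
  have hln : l.length ≤ n := by rw [hlenl]; exact hlen
  calc wordLength T h ≤ w.length := wordLength_le hw (hwp.trans hp')
    _ ≤ (3 * M + 2) * l.length := hwlen
    _ = (3 * M + 1 + 1) * l.length := by ring
    _ ≤ (3 * M + 1 + 1) * n := Nat.mul_le_mul_left _ hln
end
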